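/- arXiv:0906.1091 — 4 statements merged into one kernel-verified Lean document; each statement's English description precedes it below -/
import Mathlib

section
/- The function x ↦ (2π cot x)/(π - 2x) is strictly decreasing on (0, π/2). -/
open Real Set

/-- x ↦ 2π·cot x/(π - 2x) is strictly decreasing on (0, π/2). -/
theorem strictAnti_cot_quotient :
    StrictAntiOn (fun x : ℝ => 2 * π * Real.cot x / (π - 2 * x)) (Ioo 0 (π / 2)) := by
  have hfun : (fun x : ℝ => 2 * π * Real.cot x / (π - 2 * x))
      = fun x : ℝ => 2 * π * (Real.cos x / Real.sin x) / (π - 2 * x) := by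
    funext x; rw [Real.cot_eq_cos_div_sin]
  rw [hfun]
  have hsd : ∀ x ∈ Ioo 0 (π / 2), Real.sin x ≠ 0 ∧ (π - 2 * x) ≠ 0 := by
    intro x hx
    constructor
    · exact (Real.sin_pos_of_pos_of_lt_pi hx.1 (lt_trans hx.2 (by linarith [pi_pos]))).ne'
    · have := hx.2; intro h; rw [sub_eq_zero] at h; linarith
  have key : ∀ x ∈ Ioo 0 (π / 2),
      HasDerivAt (fun x : ℝ => 2 * π * (Real.cos x / Real.sin x) / (π - 2 * x))
      ((2 * π * (-(1 / Real.sin x ^ 2)) * (π - 2 * x)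
        - 2 * π * (Real.cos x / Real.sin x) * (-2)) / (π - 2 * x) ^ 2) x := by
    intro x hx
    obtain ⟨hs, hd⟩ := hsd x hx
    have h1 : HasDerivAt (fun x : ℝ => Real.cos x / Real.sin x) (-(1 / Real.sin x ^ 2)) x := by
      have h := (Real.hasDerivAt_cos x).div (Real.hasDerivAt_sin x) hs
      refine h.congr_deriv ?_
      rw [div_eq_iff (pow_ne_zero 2 hs), one_div, neg_mul (Real.sin x ^ 2)⁻¹, inv_mul_cancel₀ (pow_ne_zero 2 hs)]
      nlinarith [Real.sin_sq_add_cos_sq x]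
    have h2 : HasDerivAt (fun x : ℝ => 2 * π * (Real.cos x / Real.sin x))
        (2 * π * (-(1 / Real.sin x ^ 2))) x := h1.const_mul _
    have h3 : HasDerivAt (fun x : ℝ => π - 2 * x) (-2) x := by
      simpa using ((hasDerivAt_id x).const_mul (2:ℝ)).const_sub π
    exact h2.div h3 hd
  apply strictAntiOn_of_deriv_neg (convex_Ioo _ _)
  · apply ContinuousOn.div
    · exact continuousOn_const.mul (Real.continuousOn_cos.div Real.continuousOn_sin
        fun x hx => (hsd x hx).1)
    · fun_prop
    · exact fun x hx => (hsd x hx).2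
  · intro x hx
    rw [interior_Ioo] at hx
    rw [(key x hx).deriv]
    obtain ⟨hs, hd⟩ := hsd x hx
    have hspos : 0 < Real.sin x :=
      Real.sin_pos_of_pos_of_lt_pi hx.1 (lt_trans hx.2 (by linarith [pi_pos]))
    have hdpos : (0:ℝ) < π - 2 * x := by linarith [hx.2]
    have hsin2 : 2 * Real.sin x * Real.cos x < π - 2 * x := by
      have h1 : Real.sin (2 * x) = Real.sin (π - 2 * x) := (Real.sin_pi_sub _).symm
      have h2 : Real.sin (π - 2 * x) < π - 2 * x := Real.sin_lt hdpos
      have h3 := Real.sin_two_mul x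
      linarith
    have hnum : 2 * π * (-(1 / Real.sin x ^ 2)) * (π - 2 * x)
        - 2 * π * (Real.cos x / Real.sin x) * (-2)
        = 2 * π * (2 * Real.sin x * Real.cos x - (π - 2 * x)) / Real.sin x ^ 2 := by
      field_simp
      ring
    rw [hnum]
    apply div_neg_of_neg_of_pos _ (by positivity)
    apply div_neg_of_neg_of_pos _ (by positivity)
    exact mul_neg_of_pos_of_neg (by positivity) (by linarith)
end

section
/- Let L > 0, n ≥ 1, λₙ = n²π²/L², and let a ∈ L¹(0,L) with a(x) ≥ λₙ a.e. and a > λₙ on a set of positive measure. Suppose u is a nontrivial H¹ solution of u'' + a u = 0 on (0,L) with u'(0) = u'(L) = 0, and suppose x_i < x_{i+1} are such that u(x_i) = 0, u'(x_{i+1}) = 0, and u, u' have no zeros in (x_i, x_{i+1}). Then x_{i+1} - x_i ≤ L/(2n). -/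
open MeasureTheory Real Set intervalIntegral



lemma fubini_primitive {a b : ℝ} (hab : a ≤ b) {f g : ℝ → ℝ}
    (hf : IntegrableOn f (Ioc a b)) (hg : IntegrableOn g (Ioc a b)) :
    ∫ t in Ioc a b, f t * (∫ s in Ioc a t, g s) =
      ∫ s in Ioc a b, g s * (∫ t in Icc s b, f t) := by
  set μ1 := volume.restrict (Ioc a b) with hμ1
  set E : Set (ℝ × ℝ) := {p : ℝ × ℝ | a < p.2 ∧ p.2 ≤ p.1} with hE
  have hEm : MeasurableSet E :=
    (measurableSet_lt measurable_const measurable_snd).inter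
      (measurableSet_le measurable_snd measurable_fst)
  set F : ℝ × ℝ → ℝ := E.indicator (fun p => f p.1 * g p.2) with hF
  have hFi : Integrable F (μ1.prod μ1) := (Integrable.mul_prod hf hg).indicator hEm
  have swap : ∫ t, (∫ s, F (t, s) ∂μ1) ∂μ1 = ∫ s, (∫ t, F (t, s) ∂μ1) ∂μ1 :=
    integral_integral_swap hFi
  have hL : ∫ t, (∫ s, F (t, s) ∂μ1) ∂μ1 = ∫ t in Ioc a b, f t * (∫ s in Ioc a t, g s) := by
    refine setIntegral_congr_fun measurableSet_Ioc (fun t ht => ?_)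
    have h1 : (fun s => F (t, s)) = (Ioc a t).indicator (fun s => f t * g s) := by
      funext s
      by_cases h1 : a < s <;> by_cases h2 : s ≤ t <;>
        simp [hF, hE, indicator_apply, mem_setOf_eq, mem_Ioc, h1, h2]
    rw [h1, hμ1, MeasureTheory.integral_indicator measurableSet_Ioc,
      Measure.restrict_restrict measurableSet_Ioc,
      inter_eq_left.mpr (Ioc_subset_Ioc le_rfl ht.2), MeasureTheory.integral_const_mul]
  have hR : ∫ s, (∫ t, F (t, s) ∂μ1) ∂μ1 = ∫ s in Ioc a b, g s * (∫ t in Icc s b, f t) := by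
    refine setIntegral_congr_fun measurableSet_Ioc (fun s hs => ?_)
    have h1 : (fun t => F (t, s)) = (Ici s).indicator (fun t => f t * g s) := by
      funext t
      by_cases h2 : s ≤ t <;>
        simp [hF, hE, indicator_apply, mem_setOf_eq, mem_Ici, h2, hs.1]
    have h2 : Ici s ∩ Ioc a b = Icc s b := by
      ext t
      constructor
      · rintro ⟨h1', h2'⟩; exact ⟨h1', h2'.2⟩
      · rintro ⟨h1', h2'⟩; exact ⟨h1', lt_of_lt_of_le hs.1 h1', h2'⟩
    rw [h1, hμ1, MeasureTheory.integral_indicator measurableSet_Ici,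
      Measure.restrict_restrict measurableSet_Ici, h2, MeasureTheory.integral_mul_const, mul_comm]
  rw [← hL, ← hR, swap]

lemma reg_all (L : ℝ) (a u v : ℝ → ℝ) (c : ℝ)
    (hu : ∀ x ∈ Icc (0:ℝ) L, u x = u 0 + ∫ t in (0:ℝ)..x, v t)
    (hv : ∀ x ∈ Icc (0:ℝ) L, v x = - ∫ t in (0:ℝ)..x, a t * u t)
    (h0c : 0 ≤ c) (hcL : c ≤ L)
    (hc : IntervalIntegrable (fun t => a t * u t) volume 0 c) :
    ContinuousOn v (Icc 0 c) ∧ ContinuousOn u (Icc 0 c) ∧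
      ∀ x ∈ Ioo 0 c, HasDerivAt u (v x) x := by
  have hsub : Icc (0:ℝ) c ⊆ Icc 0 L := Icc_subset_Icc le_rfl hcL
  have hui : uIcc (0:ℝ) c = Icc 0 c := uIcc_of_le h0c
  have hVcont : ContinuousOn (fun x => ∫ t in (0:ℝ)..x, a t * u t) (Icc 0 c) := by
    have := intervalIntegral.continuousOn_primitive_interval' hc
      (left_mem_uIcc (a := (0:ℝ)) (b := c))
    rwa [hui] at this
  have hvcont : ContinuousOn v (Icc 0 c) := by
    refine (hVcont.neg).congr fun x hx => ?_
    rw [hv x (hsub hx)]; rfl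
  have hvint : IntervalIntegrable v volume 0 c := by
    rw [← hui] at hvcont; exact hvcont.intervalIntegrable
  have hUcont : ContinuousOn (fun x => ∫ t in (0:ℝ)..x, v t) (Icc 0 c) := by
    have := intervalIntegral.continuousOn_primitive_interval' hvint
      (left_mem_uIcc (a := (0:ℝ)) (b := c))
    rwa [hui] at this
  have hucont : ContinuousOn u (Icc 0 c) := by
    refine (((continuousOn_const (c := u 0)).add hUcont)).congr fun x hx => ?_
    rw [hu x (hsub hx)]; rfl
  refine ⟨hvcont, hucont, fun x hx => ?_⟩
  have hxL : x ∈ Ioo 0 L := ⟨hx.1, lt_of_lt_of_le hx.2 hcL⟩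
  have hvx : IntervalIntegrable v volume 0 x :=
    hvint.mono_set (by rw [hui, uIcc_of_le hx.1.le]; exact Icc_subset_Icc le_rfl hx.2.le)
  have hmeas : StronglyMeasurableAtFilter v (nhds x) := by
    refine (hvcont.mono Ioo_subset_Icc_self).stronglyMeasurableAtFilter isOpen_Ioo x hx
  have hcontat : ContinuousAt v x :=
    hvcont.continuousAt (Icc_mem_nhds hx.1 hx.2)
  have hU : HasDerivAt (fun y => u 0 + ∫ t in (0:ℝ)..y, v t) (v x) x :=
    (intervalIntegral.integral_hasDerivAt_right hvx hmeas hcontat).const_add (u 0)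
  refine hU.congr_of_eventuallyEq ?_
  filter_upwards [isOpen_Ioo.mem_nhds hxL] with y hy
  exact hu y (Ioo_subset_Icc_self hy)

section PhiFacts
variable {xi d : ℝ}

lemma phi_deriv (x : ℝ) :
    HasDerivAt (fun y => Real.sin (π / (2*d) * (y - xi)))
      (π / (2*d) * Real.cos (π / (2*d) * (x - xi))) x := by
  have h1 : HasDerivAt (fun y => π / (2*d) * (y - xi)) (π / (2*d)) x := by
    simpa using (((hasDerivAt_id x).sub_const xi).const_mul (π / (2*d)))
  simpa [mul_comm, Function.comp_def] using (Real.hasDerivAt_sin (π / (2*d) * (x - xi))).comp x h1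

lemma psi_deriv (x : ℝ) :
    HasDerivAt (fun y => π / (2*d) * Real.cos (π / (2*d) * (y - xi)))
      (-((π / (2*d))^2 * Real.sin (π / (2*d) * (x - xi)))) x := by
  have h1 : HasDerivAt (fun y => π / (2*d) * (y - xi)) (π / (2*d)) x := by
    simpa using (((hasDerivAt_id x).sub_const xi).const_mul (π / (2*d)))
  have h2 := ((Real.hasDerivAt_cos (π / (2*d) * (x - xi))).comp x h1).const_mul (π / (2*d))
  refine h2.congr_deriv ?_
  ring

end PhiFacts

lemma aux_false (L : ℝ) (hL : 0 < L) (n : ℕ) (hn : 1 ≤ n)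
    (a u v : ℝ → ℝ)
    (hprec₁ : ∀ᵐ x ∂(volume.restrict (Ioo 0 L)), (n : ℝ) ^ 2 * π ^ 2 / L ^ 2 ≤ a x)
    (hu : ∀ x ∈ Icc (0:ℝ) L, u x = u 0 + ∫ t in (0:ℝ)..x, v t)
    (hv : ∀ x ∈ Icc (0:ℝ) L, v x = - ∫ t in (0:ℝ)..x, a t * u t)
    (xi xj : ℝ) (hxij : xi < xj) (hxi : xi ∈ Icc (0:ℝ) L) (hxj : xj ∈ Icc (0:ℝ) L)
    (huxi : u xi = 0) (hvxj : v xj = 0)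
    (hreg : ∀ x ∈ Ioo xi xj, IntervalIntegrable (fun t => a t * u t) volume 0 x)
    (hvne : ∀ x ∈ Ioo xi xj, v x ≠ 0)
    (upos : ∀ x ∈ Ioo xi xj, 0 < u x)
    (hd : L / (2 * n) < xj - xi) : False := by
  set w : ℝ → ℝ := fun t => a t * u t with hw
  set d : ℝ := xj - xi with hdd
  have hd0 : 0 < d := sub_pos.mpr hxij
  set k : ℝ := π / (2 * d) with hk
  have hπ : (0:ℝ) < π := Real.pi_pos
  have hk0 : 0 < k := div_pos hπ (by linarith)
  set φ : ℝ → ℝ := fun y => Real.sin (k * (y - xi)) with hφ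
  set ψ : ℝ → ℝ := fun y => k * Real.cos (k * (y - xi)) with hψ
  set lam : ℝ := (n : ℝ) ^ 2 * π ^ 2 / L ^ 2 with hlam
  have hn0 : (0:ℝ) < n := by exact_mod_cast hn
  -- k < n π / L  and hence k^2 < lam
  have hklt : k ^ 2 < lam := by
    have h1 : L / (2 * n) < d := hd
    have h2 : k < n * π / L := by
      rw [hk, div_lt_div_iff₀ (by linarith) hL]
      have : L < 2 * n * d := by
        have := (div_lt_iff₀ (by positivity)).mp h1
        nlinarith
      nlinarith [hπ, hL, hd0]
    have : k ^ 2 < (n * π / L) ^ 2 := by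
      apply pow_lt_pow_left₀ h2 hk0.le
      norm_num
    calc k ^ 2 < (n * π / L)^2 := this
      _ = lam := by rw [hlam, div_pow]; ring
  have hkd : k * d = π / 2 := by rw [hk]; field_simp
  have hφxi : φ xi = 0 := by simp [hφ]
  have hψxj : ψ xj = 0 := by
    have : k * (xj - xi) = π / 2 := by rw [← hdd]; exact hkd
    simp [hψ, this, Real.cos_pi_div_two]
  have hφpos : ∀ x ∈ Ioo xi xj, 0 < φ x := by
    intro x hx
    apply Real.sin_pos_of_pos_of_lt_pi
    · exact mul_pos hk0 (by linarith [hx.1])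
    · have h1 : k * (x - xi) < k * d := by
        apply mul_lt_mul_of_pos_left _ hk0
        rw [hdd]; linarith [hx.2]
      calc k * (x - xi) < k * d := h1
        _ = π / 2 := hkd
        _ < π := by linarith
  have hφderiv : ∀ x : ℝ, HasDerivAt φ (ψ x) x := fun x => phi_deriv x
  have hψderiv : ∀ x : ℝ, HasDerivAt ψ (-(k^2 * φ x)) x := fun x => psi_deriv x
  have hφcont : Continuous φ := by fun_prop
  have hψcont : Continuous ψ := by fun_prop
  have h0xi : (0:ℝ) ≤ xi := hxi.1
  have hxjL : xj ≤ L := hxj.2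
  have h0xj : (0:ℝ) ≤ xj := le_trans h0xi hxij.le
  have hIooL : Ioo xi xj ⊆ Ioo 0 L := fun x hx => ⟨lt_of_le_of_lt h0xi hx.1, lt_of_lt_of_le hx.2 hxjL⟩
  -- a ≥ lam a.e. on Ioo xi xj
  have hae : ∀ᵐ x ∂(volume.restrict (Ioo xi xj)), lam ≤ a x :=
    ae_restrict_of_ae_restrict_of_subset hIooL hprec₁
  -- v is positive on (xi, xj)
  have hvpos : ∀ x ∈ Ioo xi xj, 0 < v x := by
    intro x hx
    by_contra hle
    push_neg at hle
    have hvx : v x < 0 := lt_of_le_of_ne hle (hvne x hx)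
    set c : ℝ := (x + xj) / 2 with hc
    have hcI : c ∈ Ioo xi xj := ⟨by simp only [hc]; linarith [hx.1, hx.2], by simp only [hc]; linarith [hx.2]⟩
    have hxc : x < c := by simp only [hc]; linarith [hx.2]
    obtain ⟨hvcont, hucont, hud⟩ := reg_all L a u v c hu hv (le_trans h0xi hcI.1.le)
      (le_trans hcI.2.le hxjL) (hreg c hcI)
    have hvneg : ∀ y ∈ Ioc xi x, v y < 0 := by
      intro y hy
      have hyI : y ∈ Ioo xi xj := ⟨hy.1, lt_of_le_of_lt hy.2 hx.2⟩
      by_contra hge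
      push_neg at hge
      have hypos : 0 < v y := lt_of_le_of_ne hge (Ne.symm (hvne y hyI))
      have hsub2 : uIcc y x ⊆ Icc 0 c := by
        rw [uIcc_of_le hy.2]
        exact Icc_subset_Icc (le_trans h0xi hyI.1.le) hxc.le
      obtain ⟨z, hz, hz0⟩ := intermediate_value_uIcc (hvcont.mono hsub2)
        (mem_uIcc.mpr (Or.inr ⟨hvx.le, hypos.le⟩))
      rw [uIcc_of_le hy.2] at hz
      exact hvne z ⟨lt_of_lt_of_le hy.1 hz.1, lt_of_le_of_lt hz.2 hx.2⟩ hz0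
    have hxiIcc : xi ∈ Icc (0:ℝ) c := ⟨h0xi, by linarith [hxij, hx.1, hxc]⟩
    have h1 : IntervalIntegrable v volume 0 xi := by
      apply ContinuousOn.intervalIntegrable
      rw [uIcc_of_le h0xi]
      exact hvcont.mono (Icc_subset_Icc le_rfl hxiIcc.2)
    have h2 : IntervalIntegrable v volume xi x := by
      apply ContinuousOn.intervalIntegrable
      rw [uIcc_of_le hx.1.le]
      exact hvcont.mono (Icc_subset_Icc h0xi hxc.le)
    have hux : u x - u xi = ∫ t in xi..x, v t := by
      rw [hu x ⟨le_trans h0xi hx.1.le, le_trans hx.2.le hxjL⟩, hu xi hxi]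
      rw [← intervalIntegral.integral_add_adjacent_intervals h1 h2]
      ring
    have hint : (∫ t in xi..x, v t) ≤ 0 := by
      rw [intervalIntegral.integral_of_le hx.1.le]
      exact setIntegral_nonpos measurableSet_Ioc (fun y hy => (hvneg y hy).le)
    have := upos x hx
    rw [huxi] at hux
    linarith
  by_cases hA : IntervalIntegrable w volume 0 xj
  · obtain ⟨hvcont, hucont, hud⟩ := reg_all L a u v xj hu hv h0xj hxjL hA
    have hIccsub : Icc xi xj ⊆ Icc 0 xj := Icc_subset_Icc h0xi le_rfl
    have hw_ij : IntegrableOn w (Ioc xi xj) := by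
      have := (intervalIntegrable_iff_integrableOn_Ioc_of_le h0xj).mp hA
      exact this.mono_set (Ioc_subset_Ioc h0xi le_rfl)
    have hucc : ContinuousOn u (Icc xi xj) := hucont.mono hIccsub
    have hvcc : ContinuousOn v (Icc xi xj) := hvcont.mono hIccsub
    -- E1 : FTC applied to u * ψ
    have E1 : (∫ x in xi..xj, (v x * ψ x + u x * (-(k^2 * φ x)))) = 0 := by
      have hderiv : ∀ x ∈ Ioo xi xj, HasDerivWithinAt (fun y => u y * ψ y)
          (v x * ψ x + u x * (-(k^2 * φ x))) (Ioi x) x := by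
        intro x hx
        have h1 : HasDerivAt u (v x) x := hud x ⟨lt_of_le_of_lt h0xi hx.1, hx.2⟩
        exact (h1.mul (hψderiv x)).hasDerivWithinAt
      have hcontg : ContinuousOn (fun y => u y * ψ y) (Icc xi xj) :=
        hucc.mul hψcont.continuousOn
      have hint : IntervalIntegrable (fun x => v x * ψ x + u x * (-(k^2 * φ x))) volume xi xj := by
        apply ContinuousOn.intervalIntegrable
        rw [uIcc_of_le hxij.le]
        exact (hvcc.mul hψcont.continuousOn).add
          (hucc.mul ((continuousOn_const.mul hφcont.continuousOn).neg))
      have hftc := intervalIntegral.integral_eq_sub_of_hasDeriv_right_of_le hxij.le hcontg hderiv hint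
      rw [hftc, hψxj, huxi]
      ring
    -- φ as integral of ψ
    have hφint : ∀ t ∈ Ioc xi xj, φ t = ∫ s in Ioc xi t, ψ s := by
      intro t ht
      have h1 : (∫ s in xi..t, ψ s) = φ t - φ xi :=
        intervalIntegral.integral_eq_sub_of_hasDerivAt (fun y _ => hφderiv y)
          (hψcont.intervalIntegrable xi t)
      rw [intervalIntegral.integral_of_le ht.1.le] at h1
      rw [h1, hφxi, sub_zero]
    -- tail integral of w equals v
    have hveq : ∀ s ∈ Ioc xi xj, (∫ t in Icc s xj, w t) = v s := by
      intro s hs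
      have h0s : (0:ℝ) ≤ s := le_trans h0xi hs.1.le
      have h1 : IntervalIntegrable w volume 0 s := hA.mono_set
        (by rw [uIcc_of_le h0s, uIcc_of_le h0xj]; exact Icc_subset_Icc le_rfl hs.2)
      have h2 : IntervalIntegrable w volume s xj := hA.mono_set
        (by rw [uIcc_of_le hs.2, uIcc_of_le h0xj]; exact Icc_subset_Icc h0s le_rfl)
      have hadd := intervalIntegral.integral_add_adjacent_intervals h1 h2
      have hvs := hv s ⟨h0s, le_trans hs.2 hxjL⟩
      have hvxj' := hv xj ⟨h0xj, hxjL⟩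
      rw [hvxj] at hvxj'
      rw [integral_Icc_eq_integral_Ioc, ← intervalIntegral.integral_of_le hs.2]
      have h3 : (∫ t in s..xj, w t) = (∫ t in (0:ℝ)..xj, w t) - (∫ t in (0:ℝ)..s, w t) := by
        rw [← hadd]; ring
      rw [h3]
      rw [hvs]
      linarith [hvxj']
    have hψIntOn : IntegrableOn ψ (Ioc xi xj) := hψcont.integrableOn_Ioc
    have EF := fubini_primitive hxij.le hw_ij hψIntOn
    have EL : (∫ t in Ioc xi xj, w t * (∫ s in Ioc xi t, ψ s)) = ∫ t in Ioc xi xj, w t * φ t :=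
      setIntegral_congr_fun measurableSet_Ioc (fun t ht => by rw [← hφint t ht])
    have ER : (∫ s in Ioc xi xj, ψ s * (∫ t in Icc s xj, w t)) = ∫ s in Ioc xi xj, v s * ψ s :=
      setIntegral_congr_fun measurableSet_Ioc (fun s hs => by rw [hveq s hs, mul_comm])
    have E2 : (∫ t in Ioc xi xj, w t * φ t) = ∫ s in Ioc xi xj, v s * ψ s := by
      rw [← EL, EF, ER]
    -- integrabilities
    have hvψ : IntegrableOn (fun x => v x * ψ x) (Ioc xi xj) :=
      ((hvcc.mul hψcont.continuousOn).integrableOn_Icc).mono_set Ioc_subset_Icc_self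
    have hneg_uφ : IntegrableOn (fun x => u x * (-(k^2 * φ x))) (Ioc xi xj) :=
      ((hucc.mul ((continuousOn_const.mul hφcont.continuousOn).neg)).integrableOn_Icc).mono_set
        Ioc_subset_Icc_self
    have hwφ : IntegrableOn (fun x => w x * φ x) (Ioc xi xj) := by
      have hb : ∃ C : ℝ, ∀ x, ‖φ x‖ ≤ C := ⟨1, fun x => by
        simp only [hφ, Real.norm_eq_abs]; exact Real.abs_sin_le_one _⟩
      have hbm := Integrable.bdd_mul hw_ij (hφcont.aestronglyMeasurable.restrict) (Filter.Eventually.of_forall hb.choose_spec)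
      exact hbm.congr (Filter.Eventually.of_forall fun x => mul_comm (φ x) (w x))
    -- key identity
    have hsplit : (∫ x in Ioc xi xj, ((a x - k^2) * (u x * φ x)))
        = (∫ x in Ioc xi xj, w x * φ x) + ∫ x in Ioc xi xj, (u x * (-(k^2 * φ x))) := by
      rw [← integral_add hwφ hneg_uφ]
      exact setIntegral_congr_fun measurableSet_Ioc (fun x _ => by simp only [hw]; ring)
    have hsplit2 : (∫ x in Ioc xi xj, v x * ψ x) + (∫ x in Ioc xi xj, (u x * (-(k^2 * φ x))))
        = ∫ x in Ioc xi xj, (v x * ψ x + u x * (-(k^2 * φ x))) := (integral_add hvψ hneg_uφ).symm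
    have E1' : (∫ x in Ioc xi xj, (v x * ψ x + u x * (-(k^2 * φ x)))) = 0 := by
      rw [← intervalIntegral.integral_of_le hxij.le]; exact E1
    have key : (∫ x in Ioc xi xj, ((a x - k^2) * (u x * φ x))) = 0 := by
      rw [hsplit, E2, hsplit2, E1']
    -- positivity contradiction
    set h : ℝ → ℝ := fun x => (a x - k^2) * (u x * φ x) with hh
    have key' : (∫ x in Ioo xi xj, h x) = 0 := by
      rw [← integral_Ioc_eq_integral_Ioo]; exact key
    have hpos_ae : ∀ᵐ x ∂(volume.restrict (Ioo xi xj)), 0 < h x := by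
      filter_upwards [hae, ae_restrict_mem measurableSet_Ioo] with x hx1 hx2
      have h1 := upos x hx2
      have h2 := hφpos x hx2
      have h3 : k ^ 2 < a x := lt_of_lt_of_le hklt hx1
      have : 0 < a x - k^2 := by linarith
      positivity
    have hIntOn : IntegrableOn h (Ioo xi xj) := by
      have : IntegrableOn h (Ioc xi xj) := by
        have hsum : IntegrableOn (fun x => w x * φ x + u x * (-(k^2 * φ x))) (Ioc xi xj) :=
          hwφ.add hneg_uφ
        exact hsum.congr_fun (fun x _ => by simp only [hh, hw]; ring) measurableSet_Ioc
      exact this.mono_set Ioo_subset_Ioc_self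
    have hposint : 0 < ∫ x in Ioo xi xj, h x := by
      rw [setIntegral_pos_iff_support_of_nonneg_ae
        (hpos_ae.mono fun x hx => hx.le) hIntOn]
      have hnull : volume (Ioo xi xj \ Function.support h) = 0 := by
        have h1 := (ae_restrict_iff' measurableSet_Ioo).mp hpos_ae
        rw [ae_iff] at h1
        refine measure_mono_null ?_ h1
        intro x hx
        simp only [mem_setOf_eq]
        intro himp
        have hx0 : h x = 0 := by
          by_contra hne; exact hx.2 hne
        exact absurd (hx0 ▸ himp hx.1) (lt_irrefl 0)
      have hsub : Ioo xi xj ⊆ (Function.support h ∩ Ioo xi xj) ∪ (Ioo xi xj \ Function.support h) := by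
        intro x hx
        by_cases hxs : x ∈ Function.support h
        · exact Or.inl ⟨hxs, hx⟩
        · exact Or.inr ⟨hx, hxs⟩
      have hle : volume (Ioo xi xj) ≤ volume (Function.support h ∩ Ioo xi xj)
          + volume (Ioo xi xj \ Function.support h) :=
        (measure_mono hsub).trans (measure_union_le _ _)
      rw [hnull, add_zero] at hle
      have hIoo : (0:ENNReal) < volume (Ioo xi xj) := by
        rw [Real.volume_Ioo]
        exact ENNReal.ofReal_pos.mpr (by linarith)
      exact lt_of_lt_of_le hIoo hle
    rw [key'] at hposint
    exact lt_irrefl 0 hposint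
  · -- Case C: w not integrable up to xj: contradiction with positivity of v
    set m : ℝ := (xi + xj) / 2 with hm
    have hmI : m ∈ Ioo xi xj := ⟨by simp only [hm]; linarith, by simp only [hm]; linarith⟩
    have h0m : (0:ℝ) ≤ m := le_trans h0xi hmI.1.le
    apply hA
    rw [intervalIntegrable_iff_integrableOn_Ioc_of_le h0xj]
    have hI0m : IntegrableOn w (Ioc 0 m) :=
      (intervalIntegrable_iff_integrableOn_Ioc_of_le h0m).mp (hreg m hmI)
    have hmj : IntegrableOn w (Ioc m xj) := by
      set b : ℕ → ℝ := fun i => xj - (xj - m) / (i + 2) with hb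
      have hbmem : ∀ i : ℕ, b i ∈ Ioo m xj := by
        intro i
        have hp : (0:ℝ) < (i:ℝ) + 2 := by positivity
        have hmj' : (0:ℝ) < xj - m := by linarith [hmI.2]
        constructor
        · have h1 : (xj - m) / (i + 2) < (xj - m) := by
            apply div_lt_self hmj'
            have : (0:ℝ) ≤ (i:ℝ) := Nat.cast_nonneg i
            linarith
          simp only [hb]; linarith
        · have h2 : 0 < (xj - m) / ((i:ℝ) + 2) := div_pos hmj' hp
          simp only [hb]; linarith
      have hbI : ∀ i : ℕ, b i ∈ Ioo xi xj :=
        fun i => ⟨lt_trans hmI.1 (hbmem i).1, (hbmem i).2⟩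
      have hfi : ∀ i : ℕ, IntegrableOn w (Ioc m (b i)) := by
        intro i
        have := (intervalIntegrable_iff_integrableOn_Ioc_of_le
          (le_trans h0xi (hbI i).1.le)).mp (hreg _ (hbI i))
        exact this.mono_set (Ioc_subset_Ioc h0m le_rfl)
      have htend : Filter.Tendsto b Filter.atTop (nhds xj) := by
        have h1 : Filter.Tendsto (fun i : ℕ => (xj - m) / ((i:ℝ) + 2)) Filter.atTop (nhds 0) := by
          apply Filter.Tendsto.div_atTop tendsto_const_nhds
          exact Filter.tendsto_atTop_add_const_right _ 2 tendsto_natCast_atTop_atTop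
        have h2 : Filter.Tendsto (fun _ : ℕ => xj) Filter.atTop (nhds xj) := tendsto_const_nhds
        simpa [hb] using h2.sub h1
      refine integrableOn_Ioc_of_intervalIntegral_norm_bounded_right (I := v m) hfi htend ?_
      apply Filter.Eventually.of_forall
      intro i
      have hsub : Ioc m (b i) ⊆ Ioo xi xj :=
        fun x hx => ⟨lt_trans hmI.1 hx.1, lt_of_le_of_lt hx.2 (hbmem i).2⟩
      have haew : ∀ᵐ x ∂(volume.restrict (Ioc m (b i))), ‖w x‖ = w x := by
        have hae' : ∀ᵐ x ∂(volume.restrict (Ioc m (b i))), lam ≤ a x :=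
          ae_restrict_of_ae_restrict_of_subset hsub hae
        filter_upwards [hae', ae_restrict_mem measurableSet_Ioc] with x h1 h2
        have hux := upos x (hsub h2)
        have hlam0 : 0 < lam := by
          rw [hlam]; positivity
        have h0w : 0 ≤ w x := by
          simp only [hw]; nlinarith
        exact Real.norm_of_nonneg h0w
      rw [integral_congr_ae haew]
      have h1 : IntervalIntegrable w volume m (b i) :=
        (intervalIntegrable_iff_integrableOn_Ioc_of_le (hbmem i).1.le).mpr (hfi i)
      have hIm : IntervalIntegrable w volume 0 m := hreg m hmI
      have hadd := intervalIntegral.integral_add_adjacent_intervals hIm h1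
      have hvm := hv m ⟨h0m, le_trans hmI.2.le hxjL⟩
      have hvb := hv (b i) ⟨le_trans h0xi (hbI i).1.le, le_trans (hbI i).2.le hxjL⟩
      have hvbpos := hvpos (b i) (hbI i)
      rw [← intervalIntegral.integral_of_le (hbmem i).1.le]
      have heq : (∫ x in m..(b i), w x) = v m - v (b i) := by
        rw [hvm, hvb, ← hadd]; ring
      rw [heq]
      linarith
    have : Ioc (0:ℝ) xj = Ioc 0 m ∪ Ioc m xj := (Ioc_union_Ioc_eq_Ioc h0m hmI.2.le).symm
    rw [this]
    exact hI0m.union hmj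

/-- if λₙ ≺ a, u is a nontrivial solution of the Neumann problem
u'' + au = 0, u'(0) = u'(L) = 0 (encoded in integral form, v being u'), and
x_i < x_{i+1} are a zero of u and a zero of u' respectively with no zeros of u or u'
in between, then x_{i+1} - x_i ≤ L/(2n). -/
theorem gap_between_zeros_le (L : ℝ) (hL : 0 < L) (n : ℕ) (hn : 1 ≤ n)
    (a u v : ℝ → ℝ)
    (ha : IntegrableOn a (Ioo 0 L))
    (hprec₁ : ∀ᵐ x ∂(volume.restrict (Ioo 0 L)), (n : ℝ) ^ 2 * π ^ 2 / L ^ 2 ≤ a x)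
    (hprec₂ : 0 < volume (Ioo 0 L ∩ {x | (n : ℝ) ^ 2 * π ^ 2 / L ^ 2 < a x}))
    (hu : ∀ x ∈ Icc (0:ℝ) L, u x = u 0 + ∫ t in (0:ℝ)..x, v t)
    (hv : ∀ x ∈ Icc (0:ℝ) L, v x = - ∫ t in (0:ℝ)..x, a t * u t)
    (hvL : v L = 0)
    (hnontriv : ∃ x ∈ Icc (0:ℝ) L, u x ≠ 0)
    (xi xj : ℝ) (hxij : xi < xj) (hxi : xi ∈ Icc (0:ℝ) L) (hxj : xj ∈ Icc (0:ℝ) L)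
    (huxi : u xi = 0) (hvxj : v xj = 0)
    (hnozero : ∀ x ∈ Ioo xi xj, u x ≠ 0 ∧ v x ≠ 0) :
    xj - xi ≤ L / (2 * n) := by
  by_contra hd'
  push_neg at hd'
  by_cases hB : ∀ x ∈ Ioo xi xj, IntervalIntegrable (fun t => a t * u t) volume 0 x
  · have hvne : ∀ x ∈ Ioo xi xj, v x ≠ 0 := fun x hx => (hnozero x hx).2
    have hsigncases : (∀ x ∈ Ioo xi xj, 0 < u x) ∨ (∀ x ∈ Ioo xi xj, u x < 0) := by
      by_cases hpos : ∀ x ∈ Ioo xi xj, 0 < u x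
      · exact Or.inl hpos
      · right
        push_neg at hpos
        obtain ⟨p, hp, hup⟩ := hpos
        have hupneg : u p < 0 := lt_of_le_of_ne hup (hnozero p hp).1
        intro q hq
        by_contra hge
        push_neg at hge
        have huq : 0 < u q := lt_of_le_of_ne hge (Ne.symm (hnozero q hq).1)
        have hmax : max p q < xj := max_lt hp.2 hq.2
        have hmax2 : xi < max p q := lt_max_iff.mpr (Or.inl hp.1)
        set c : ℝ := (max p q + xj) / 2 with hc
        have hcI : c ∈ Ioo xi xj := ⟨by simp only [hc]; linarith, by simp only [hc]; linarith⟩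
        have h0c : (0:ℝ) ≤ c := le_trans hxi.1 hcI.1.le
        have hcL : c ≤ L := le_trans hcI.2.le hxj.2
        obtain ⟨hvcont, hucont, hud⟩ := reg_all L a u v c hu hv h0c hcL (hB c hcI)
        have hsubpq : uIcc p q ⊆ Icc 0 c := fun y hy =>
          ⟨le_trans (le_trans hxi.1 (le_of_lt (lt_min hp.1 hq.1))) hy.1,
            le_trans hy.2 (by simp only [hc]; linarith)⟩
        obtain ⟨z, hz, hz0⟩ := intermediate_value_uIcc (hucont.mono hsubpq)
          (mem_uIcc.mpr (Or.inl ⟨hupneg.le, huq.le⟩))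
        have hzI : z ∈ Ioo xi xj :=
          ⟨lt_of_lt_of_le (lt_min hp.1 hq.1) hz.1, lt_of_le_of_lt hz.2 hmax⟩
        exact (hnozero z hzI).1 hz0
    rcases hsigncases with hupos | huneg
    · exact aux_false L hL n hn a u v hprec₁ hu hv xi xj hxij hxi hxj huxi hvxj hB hvne hupos hd'
    · refine aux_false L hL n hn a (fun x => -u x) (fun x => -v x) hprec₁ ?_ ?_ xi xj hxij hxi hxj
        ?_ ?_ ?_ ?_ ?_ hd'
      · intro x hx
        rw [intervalIntegral.integral_neg, hu x hx]
        ring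
      · intro x hx
        simp only [mul_neg]
        rw [intervalIntegral.integral_neg, hv x hx]
        try ring
      · simp [huxi]
      · simp [hvxj]
      · intro x hx
        simp only [mul_neg]
        exact (hB x hx).neg
      · intro x hx
        simpa using (hnozero x hx).2
      · intro x hx
        simpa using huneg x hx
  · push_neg at hB
    obtain ⟨x₀, hx₀, hni⟩ := hB
    have hvx := hv x₀ ⟨le_trans hxi.1 hx₀.1.le, le_trans hx₀.2.le hxj.2⟩
    rw [intervalIntegral.integral_undef hni] at hvx
    exact (hnozero x₀ hx₀).2 (by rw [hvx]; ring)
end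

section
/- Let L > 0, n ≥ 1, λₙ = n²π²/L², and a ∈ L¹(0,L) with λₙ ≺ a (i.e., a ≥ λₙ a.e. with strict inequality on a set of positive measure). If u is a nontrivial solution of u'' + au = 0, u'(0) = u'(L) = 0, and the zeros of u' in [0,L] are 0 = x₀ < x₂ < … < x_{2m} = L with the zeros of u interlacing as x₁ < x₃ < … < x_{2m-1}, then m ≥ n + 1. -/
open MeasureTheory Real Set intervalIntegral

open Function

lemma nq_parts {g φ ψ : ℝ → ℝ} {α β : ℝ} (hαβ : α ≤ β)
    (hg : Integrable g volume)
    (hφ : ∀ t, HasDerivAt φ (ψ t) t) (hψ : Continuous ψ) :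
    ∫ t in α..β, (∫ s in α..t, g s) * ψ t
      = (∫ s in α..β, g s) * φ β - ∫ t in α..β, g t * φ t := by
  set μ := volume.restrict (Ioc α β) with hμ
  have hmeas : MeasurableSet (Ioc α β) := measurableSet_Ioc
  have hφc : Continuous φ := by
    refine continuous_iff_continuousAt.mpr fun t => (hφ t).continuousAt
  have hψμ : Integrable ψ μ := hψ.integrableOn_Ioc
  have hgμ : Integrable g μ := hg.restrict
  set F : ℝ × ℝ → ℝ := fun p => if p.2 ≤ p.1 then ψ p.1 * g p.2 else 0 with hF
  have hE : MeasurableSet {p : ℝ × ℝ | p.2 ≤ p.1} :=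
    measurableSet_le measurable_snd measurable_fst
  have hFeq : F = indicator {p : ℝ × ℝ | p.2 ≤ p.1} (fun p => ψ p.1 * g p.2) := by
    funext p; by_cases h : p.2 ≤ p.1 <;> simp [hF, indicator_apply, h]
  have hFint : Integrable F (μ.prod μ) := by
    rw [hFeq]
    exact (hψμ.mul_prod hgμ).indicator hE
  have hswap : ∫ t, (∫ s, F (t, s) ∂μ) ∂μ = ∫ s, (∫ t, F (t, s) ∂μ) ∂μ :=
    integral_integral_swap hFint
  have hLHS : ∫ t in α..β, (∫ s in α..t, g s) * ψ t = ∫ t, (∫ s, F (t, s) ∂μ) ∂μ := by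
    rw [intervalIntegral.integral_of_le hαβ, hμ]
    refine setIntegral_congr_fun hmeas fun t ht => ?_
    have h1 : ∀ s : ℝ, F (t, s) = indicator (Iic t) (fun s => ψ t * g s) s := by
      intro s; by_cases h : s ≤ t <;> simp [hF, indicator_apply, h]
    simp_rw [h1]
    rw [setIntegral_indicator measurableSet_Iic]
    have h2 : Ioc α β ∩ Iic t = Ioc α t := by
      ext s; simp only [mem_inter_iff, mem_Ioc, mem_Iic]
      exact ⟨fun h => ⟨h.1.1, h.2⟩, fun h => ⟨⟨h.1, h.2.trans ht.2⟩, h.2⟩⟩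
    rw [h2, MeasureTheory.integral_const_mul, intervalIntegral.integral_of_le ht.1.le, mul_comm]
  have hRHS : ∫ s, (∫ t, F (t, s) ∂μ) ∂μ
      = (∫ s in α..β, g s) * φ β - ∫ t in α..β, g t * φ t := by
    have key : ∀ s ∈ Ioc α β, (∫ t, F (t, s) ∂μ) = g s * φ β - g s * φ s := by
      intro s hs
      have h1 : ∀ t : ℝ, F (t, s) = indicator (Ici s) (fun t => ψ t * g s) t := by
        intro t; by_cases h : s ≤ t <;> simp [hF, indicator_apply, h]
      simp_rw [h1]
      rw [setIntegral_indicator measurableSet_Ici]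
      have h2 : Ioc α β ∩ Ici s = Icc s β := by
        ext t; simp only [mem_inter_iff, mem_Ioc, mem_Icc, mem_Ici]
        exact ⟨fun h => ⟨h.2, h.1.2⟩, fun h => ⟨⟨hs.1.trans_le h.1, h.2⟩, h.1⟩⟩
      have hFTC : ∫ t in s..β, ψ t = φ β - φ s :=
        intervalIntegral.integral_eq_sub_of_hasDerivAt (fun t _ => hφ t)
          (hψ.intervalIntegrable s β)
      rw [h2, integral_Icc_eq_integral_Ioc, MeasureTheory.integral_mul_const,
        ← intervalIntegral.integral_of_le hs.2, hFTC]
      ring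
    rw [setIntegral_congr_fun hmeas key]
    have hint1 : IntegrableOn (fun s => g s * φ β) (Ioc α β) := hgμ.mul_const _
    have hint2 : IntegrableOn (fun s => g s * φ s) (Ioc α β) :=
      IntegrableOn.mul_continuousOn_of_subset hg.integrableOn hφc.continuousOn
        hmeas isCompact_Icc Ioc_subset_Icc_self
    rw [integral_sub hint1 hint2, MeasureTheory.integral_mul_const,
      ← intervalIntegral.integral_of_le hαβ, ← intervalIntegral.integral_of_le hαβ]
  rw [hLHS, hswap, hRHS]

lemma nq_wronskian {U V g w w' w'' : ℝ → ℝ} {α β : ℝ} (hαβ : α ≤ β)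
    (hU' : ∀ t, HasDerivAt U (V t) t)
    (hg : Integrable g volume)
    (hVeq : ∀ t, V t = V α - ∫ s in α..t, g s)
    (hw : ∀ t, HasDerivAt w (w' t) t)
    (hw' : ∀ t, HasDerivAt w' (w'' t) t)
    (hw''c : Continuous w'') :
    V β * w β - U β * w' β - (V α * w α - U α * w' α)
      = ∫ t in α..β, (-(g t) * w t - U t * w'' t) := by
  have hUc : Continuous U := continuous_iff_continuousAt.mpr fun t => (hU' t).continuousAt
  have hwc : Continuous w := continuous_iff_continuousAt.mpr fun t => (hw t).continuousAt
  have hw'c : Continuous w' := continuous_iff_continuousAt.mpr fun t => (hw' t).continuousAt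
  have hVc : Continuous V := by
    have : V = fun t => V α - ∫ s in α..t, g s := funext hVeq
    rw [this]
    exact continuous_const.sub (hg.continuous_primitive α)
  -- integration by parts for U * w'
  have hE2 : ∫ t in α..β, (V t * w' t + U t * w'' t) = U β * w' β - U α * w' α := by
    exact intervalIntegral.integral_deriv_mul_eq_sub (fun t _ => hU' t) (fun t _ => hw' t)
      (hVc.intervalIntegrable α β) (hw''c.intervalIntegrable α β)
  -- ∫ V w' via nq_parts
  have hparts : ∫ t in α..β, (∫ s in α..t, g s) * w' t
      = (∫ s in α..β, g s) * w β - ∫ t in α..β, g t * w t :=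
    nq_parts hαβ hg hw hw'c
  have hFTCw : ∫ t in α..β, w' t = w β - w α :=
    integral_eq_sub_of_hasDerivAt (fun t _ => hw t) (hw'c.intervalIntegrable α β)
  have hE1 : ∫ t in α..β, V t * w' t
      = V α * (w β - w α) - ((∫ s in α..β, g s) * w β - ∫ t in α..β, g t * w t) := by
    have hcong : ∫ t in α..β, V t * w' t
        = ∫ t in α..β, (V α * w' t - (∫ s in α..t, g s) * w' t) := by
      refine intervalIntegral.integral_congr fun t _ => ?_
      rw [hVeq t]; ring
    rw [hcong, intervalIntegral.integral_sub, intervalIntegral.integral_const_mul, hFTCw,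
      hparts]
    · exact (continuous_const.mul hw'c).intervalIntegrable α β
    · exact (((hg.continuous_primitive α).mul hw'c)).intervalIntegrable α β
  have hsplit : ∫ t in α..β, (V t * w' t + U t * w'' t)
      = (∫ t in α..β, V t * w' t) + ∫ t in α..β, U t * w'' t := by
    exact intervalIntegral.integral_add ((hVc.mul hw'c).intervalIntegrable α β)
      ((hUc.mul hw''c).intervalIntegrable α β)
  have hsplit2 : ∫ t in α..β, (-(g t) * w t - U t * w'' t)
      = -(∫ t in α..β, g t * w t) - ∫ t in α..β, U t * w'' t := by
    have h1 : IntervalIntegrable (fun t => g t * w t) volume α β := by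
      apply IntervalIntegrable.mul_continuousOn hg.intervalIntegrable hwc.continuousOn
    have h2 : IntervalIntegrable (fun t => U t * w'' t) volume α β :=
      (hUc.mul hw''c).intervalIntegrable α β
    have h1n : IntervalIntegrable (fun t => -(g t * w t)) volume α β := by
      exact h1.neg
    have e : ∫ t in α..β, (-(g t) * w t - U t * w'' t)
        = ∫ t in α..β, ((fun t => -(g t * w t)) t - (fun t => U t * w'' t) t) :=
      intervalIntegral.integral_congr fun t _ => by ring
    rw [e, intervalIntegral.integral_sub h1n h2]
    have e2 : ∫ t in α..β, (fun t => -(g t * w t)) t = -∫ t in α..β, g t * w t := by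
      rw [← intervalIntegral.integral_neg]
    rw [e2]
  have hVβ : V β * w β = (V α - ∫ s in α..β, g s) * w β := by rw [← hVeq β]
  rw [hsplit2, hVβ]
  have := hE2
  rw [hsplit] at this
  linarith [hE1, this]
lemma nq_ae_Icc {p : ℝ → Prop} {α γ : ℝ} (h : ∀ᵐ t ∂(volume.restrict (Ioc α γ)), p t) :
    ∀ᵐ t ∂(volume.restrict (Icc α γ)), p t := by
  rw [ae_restrict_iff' measurableSet_Ioc] at h
  rw [ae_restrict_iff' measurableSet_Icc]
  have hα : ∀ᵐ t : ℝ ∂volume, t ≠ α := by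
    rw [ae_iff]
    have : {t : ℝ | ¬ t ≠ α} = {α} := by ext t; simp
    rw [this]; exact measure_singleton α
  filter_upwards [h, hα] with t h1 h2 ht
  exact h1 ⟨lt_of_le_of_ne ht.1 (Ne.symm h2), ht.2⟩

lemma nq_sign {U : ℝ → ℝ} (hc : Continuous U) {S : Set ℝ} (hS : S.OrdConnected)
    (hne : ∀ t ∈ S, U t ≠ 0) : (∀ t ∈ S, 0 < U t) ∨ (∀ t ∈ S, U t < 0) := by
  by_contra h
  push_neg at h
  obtain ⟨⟨t1, ht1, h1⟩, t2, ht2, h2⟩ := h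
  have h0 : (0:ℝ) ∈ uIcc (U t1) (U t2) := by
    rw [Set.mem_uIcc]; left; exact ⟨h1, h2⟩
  obtain ⟨t, htm, ht0⟩ := intermediate_value_uIcc (hc.continuousOn) h0
  exact hne t (hS.uIcc_subset ht1 ht2 htm) ht0

lemma nq_gapA {lam r : ℝ} {aa U V g : ℝ → ℝ} {α β : ℝ}
    (hαβ : α < β) (hr : 0 < r) (hlam : lam = r ^ 2)
    (hU' : ∀ t, HasDerivAt U (V t) t)
    (hg : Integrable g volume)
    (hVeq : ∀ t, V t = V α - ∫ s in α..t, g s)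
    (hag : ∀ᵐ t ∂(volume.restrict (Ioc α β)), g t = aa t * U t)
    (halam : ∀ᵐ t ∂(volume.restrict (Ioc α β)), lam ≤ aa t)
    (hVα : V α = 0) (hUβ : U β = 0)
    (hUpos : ∀ t ∈ Ico α β, 0 < U t) :
    β - α ≤ π / (2 * r) ∧
      (0 < volume (Ioo α β ∩ {t | lam < aa t}) → β - α < π / (2 * r)) := by
  have hπr : 0 < π / (2 * r) := by positivity
  have h2r : r * (π / (2 * r)) = π / 2 := by field_simp
  set w : ℝ → ℝ := fun t => Real.cos (r * (t - α)) with hwdef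
  set w' : ℝ → ℝ := fun t => -Real.sin (r * (t - α)) * r with hw'def
  set w'' : ℝ → ℝ := fun t => -(r * r) * Real.cos (r * (t - α)) with hw''def
  have hlin : ∀ t : ℝ, HasDerivAt (fun t => r * (t - α)) r t := by
    intro t
    simpa using ((hasDerivAt_id t).sub_const α).const_mul r
  have hw : ∀ t, HasDerivAt w (w' t) t := by
    intro t
    simpa [hw'def] using (hlin t).cos
  have hw' : ∀ t, HasDerivAt w' (w'' t) t := by
    intro t
    have h := ((hlin t).sin.neg).mul_const r
    exact h.congr_deriv (by show _ = -(r * r) * Real.cos (r * (t - α)); ring)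
  have hw''c : Continuous w'' := by
    simp only [hw''def]; fun_prop
  have hwc : Continuous w := by simp only [hwdef]; fun_prop
  have hUc : Continuous U := continuous_iff_continuousAt.mpr fun t => (hU' t).continuousAt
  have hUnn : ∀ t ∈ Ioc α β, 0 ≤ U t := by
    intro t ht
    rcases lt_or_eq_of_le ht.2 with h | h
    · exact (hUpos t ⟨ht.1.le, h⟩).le
    · rw [h, hUβ]
  have hWid : ∀ γ, α ≤ γ → U γ * (-(w' γ)) + V γ * w γ
      = ∫ t in α..γ, (-(g t) * w t - U t * w'' t) := by
    intro γ hγ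
    have h := nq_wronskian hγ hU' hg hVeq hw hw' hw''c
    have hwα : w α = 1 := by simp [hwdef]
    have hw'α : w' α = 0 := by simp [hw'def]
    rw [hwα, hw'α, hVα] at h
    linarith [h]
  -- pointwise rewriting of the integrand
  have hptw : ∀ t, aa t * U t * w t + U t * w'' t = (aa t - lam) * (U t * w t) := by
    intro t
    simp only [hw''def, hwdef, hlam]
    ring
  -- a.e. nonneg of (g w + U w'') on subintervals where U, w ≥ 0
  have haeint : ∀ γ, α < γ → γ ≤ β → γ - α ≤ π / (2 * r) →
      (∫ t in α..γ, (-(g t) * w t - U t * w'' t)) ≤ 0 := by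
    intro γ hαγ hγβ hγq
    have hsub : Ioc α γ ⊆ Ioc α β := Ioc_subset_Ioc_right hγβ
    have hag2 := ae_restrict_of_ae_restrict_of_subset hsub hag
    have hal2 := ae_restrict_of_ae_restrict_of_subset hsub halam
    have hnn : 0 ≤ᵐ[volume.restrict (Icc α γ)]
        fun t => -(-(g t) * w t - U t * w'' t) := by
      apply nq_ae_Icc
      filter_upwards [hag2, hal2, ae_restrict_mem measurableSet_Ioc] with t h1 h2 ht
      have hwt : 0 ≤ w t := by
        apply Real.cos_nonneg_of_mem_Icc
        have hb1 : 0 < r * (t - α) := mul_pos hr (by linarith [ht.1])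
        have hb2 : r * (t - α) ≤ r * (π / (2 * r)) :=
          mul_le_mul_of_nonneg_left (by linarith [ht.2, hγq]) hr.le
        constructor
        · nlinarith [Real.pi_pos]
        · linarith [h2r]
      have hUt : 0 ≤ U t := hUnn t (hsub ht)
      have : -(-(g t) * w t - U t * w'' t) = (aa t - lam) * (U t * w t) := by
        rw [h1]; rw [← hptw t]; ring
      rw [this]
      exact mul_nonneg (by linarith) (mul_nonneg hUt hwt)
    have h0 := intervalIntegral.integral_nonneg_of_ae_restrict hαγ.le hnn
    have hInt : IntervalIntegrable (fun t => -(g t) * w t - U t * w'' t) volume α γ := by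
      apply IntervalIntegrable.sub _ ((hUc.mul hw''c).intervalIntegrable α γ)
      have : IntervalIntegrable (fun t => g t * w t) volume α γ :=
        IntervalIntegrable.mul_continuousOn hg.intervalIntegrable hwc.continuousOn
      simp only [neg_mul]
      exact this.neg
    rw [intervalIntegral.integral_neg] at h0
    linarith [h0]
  have part1 : β - α ≤ π / (2 * r) := by
    by_contra hcon
    push_neg at hcon
    set γ := α + π / (2 * r) with hγdef
    have hγ1 : α < γ := by simp [hγdef]; positivity
    have hγ2 : γ < β := by simp only [hγdef]; linarith
    have harg : r * (γ - α) = π / 2 := by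
      have : γ - α = π / (2 * r) := by simp [hγdef]
      rw [this, h2r]
    have hwγ : w γ = 0 := by
      simp only [hwdef, harg, Real.cos_pi_div_two]
    have hw'γ : w' γ = -r := by
      simp only [hw'def, harg, Real.sin_pi_div_two]; ring
    have hid := hWid γ hγ1.le
    rw [hwγ, hw'γ] at hid
    have hle := haeint γ hγ1 hγ2.le (by simp [hγdef])
    have hUγ : 0 < U γ := hUpos γ ⟨hγ1.le, hγ2⟩
    rw [← hid] at hle
    nlinarith
  refine ⟨part1, fun hvol => ?_⟩
  rcases lt_or_eq_of_le part1 with h | heq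
  · exact h
  exfalso
  have harg : r * (β - α) = π / 2 := by
    rw [heq, h2r]
  have hwβ : w β = 0 := by simp only [hwdef, harg, Real.cos_pi_div_two]
  have hw'β : w' β = -r := by simp only [hw'def, harg, Real.sin_pi_div_two]; ring
  have hid := hWid β hαβ.le
  rw [hwβ, hw'β, hUβ] at hid
  simp only [zero_mul, mul_zero, add_zero, neg_neg, zero_add] at hid
  -- so the integral over [α,β] is 0; derive strict positivity of the reversed integrand
  set F2 : ℝ → ℝ := fun t => g t * w t + U t * w'' t with hF2def
  have hnn : 0 ≤ᵐ[volume.restrict (Ioc α β)] F2 := by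
    filter_upwards [hag, halam, ae_restrict_mem measurableSet_Ioc] with t h1 h2 ht
    have hwt : 0 ≤ w t := by
      apply Real.cos_nonneg_of_mem_Icc
      have hb1 : 0 < r * (t - α) := mul_pos hr (by linarith [ht.1])
      have hb2 : r * (t - α) ≤ r * (π / (2 * r)) :=
        mul_le_mul_of_nonneg_left (by linarith [ht.2, heq.le]) hr.le
      constructor
      · nlinarith [Real.pi_pos]
      · linarith [h2r]
    have hUt : 0 ≤ U t := hUnn t ht
    have he : F2 t = (aa t - lam) * (U t * w t) := by
      simp only [hF2def]; rw [h1, hptw t]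
    rw [he]
    exact mul_nonneg (by linarith) (mul_nonneg hUt hwt)
  have hint : IntegrableOn F2 (Ioc α β) := by
    have hi1 : IntegrableOn (fun t => g t * w t) (Ioc α β) :=
      IntegrableOn.mul_continuousOn_of_subset hg.integrableOn hwc.continuousOn
        measurableSet_Ioc isCompact_Icc Ioc_subset_Icc_self
    have hi2 : IntegrableOn (fun t => U t * w'' t) (Ioc α β) :=
      ((hUc.mul hw''c).intervalIntegrable α β).1
    exact hi1.add hi2
  have hag' : ∀ᵐ t : ℝ ∂volume, t ∈ Ioc α β → g t = aa t * U t :=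
    (ae_restrict_iff' measurableSet_Ioc).mp hag
  have halam' : ∀ᵐ t : ℝ ∂volume, t ∈ Ioc α β → lam ≤ aa t :=
    (ae_restrict_iff' measurableSet_Ioc).mp halam
  have hboth : ∀ᵐ t : ℝ ∂volume, t ∈ Ioc α β → (g t = aa t * U t ∧ lam ≤ aa t) := by
    filter_upwards [hag', halam'] with t h1 h2 ht
    exact ⟨h1 ht, h2 ht⟩
  set T : Set ℝ := {t | ¬ (t ∈ Ioc α β → (g t = aa t * U t ∧ lam ≤ aa t))} with hTdef
  have hT : volume T = 0 := ae_iff.mp hboth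
  set S : Set ℝ := Ioo α β ∩ {t | lam < aa t} with hSdef
  have hST : volume (S \ T) = volume S := measure_diff_null hT
  have hsub2 : S \ T ⊆ Function.support F2 ∩ Ioc α β := by
    rintro t ⟨⟨htIoo, htA⟩, htT⟩
    simp only [hTdef, mem_setOf_eq, not_not] at htT
    have htIoc : t ∈ Ioc α β := ⟨htIoo.1, htIoo.2.le⟩
    have hP : g t = aa t * U t ∧ lam ≤ aa t := htT htIoc
    have htA' : lam < aa t := htA
    have hwt : 0 < w t := by
      apply Real.cos_pos_of_mem_Ioo
      have hb1 : 0 < r * (t - α) := mul_pos hr (by linarith [htIoo.1])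
      have hb2 : r * (t - α) < r * (π / (2 * r)) :=
        mul_lt_mul_of_pos_left (by linarith [htIoo.2, heq.le]) hr
      constructor
      · nlinarith [Real.pi_pos]
      · linarith [h2r]
    have hUt : 0 < U t := hUpos t ⟨htIoo.1.le, htIoo.2⟩
    have he : F2 t = (aa t - lam) * (U t * w t) := by
      simp only [hF2def]; rw [hP.1, hptw t]
    refine ⟨?_, htIoc⟩
    rw [Function.mem_support, he]
    have : 0 < (aa t - lam) * (U t * w t) :=
      mul_pos (by linarith [htA']) (mul_pos hUt hwt)
    exact ne_of_gt this
  have hsupp : 0 < volume (Function.support F2 ∩ Ioc α β) := by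
    calc 0 < volume S := hvol
    _ = volume (S \ T) := hST.symm
    _ ≤ volume (Function.support F2 ∩ Ioc α β) := measure_mono hsub2
  have hpos := (setIntegral_pos_iff_support_of_nonneg_ae hnn hint).mpr hsupp
  -- but the integral is zero
  have hzero : ∫ t in Ioc α β, F2 t = 0 := by
    have h1 : ∫ t in α..β, F2 t = - ∫ t in α..β, (-(g t) * w t - U t * w'' t) := by
      rw [← intervalIntegral.integral_neg]
      exact intervalIntegral.integral_congr fun t _ => by simp only [hF2def]; ring
    rw [← intervalIntegral.integral_of_le hαβ.le, h1, ← hid]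
    ring
  rw [hzero] at hpos
  exact lt_irrefl 0 hpos
lemma nq_gapB {lam r : ℝ} {aa U V g : ℝ → ℝ} {α β : ℝ}
    (hαβ : α < β) (hr : 0 < r) (hlam : lam = r ^ 2)
    (hU' : ∀ t, HasDerivAt U (V t) t)
    (hg : Integrable g volume)
    (hVeq : ∀ t, V t = V α - ∫ s in α..t, g s)
    (hag : ∀ᵐ t ∂(volume.restrict (Ioc α β)), g t = aa t * U t)
    (halam : ∀ᵐ t ∂(volume.restrict (Ioc α β)), lam ≤ aa t)
    (hUα : U α = 0) (hVβ : V β = 0)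
    (hUpos : ∀ t ∈ Ioc α β, 0 < U t)
    (hVne : ∀ t ∈ Ioo α β, V t ≠ 0) :
    β - α ≤ π / (2 * r) ∧
      (0 < volume (Ioo α β ∩ {t | lam < aa t}) → β - α < π / (2 * r)) := by
  have hπr : 0 < π / (2 * r) := by positivity
  have h2r : r * (π / (2 * r)) = π / 2 := by field_simp
  set w : ℝ → ℝ := fun t => Real.sin (r * (t - α)) with hwdef
  set w' : ℝ → ℝ := fun t => Real.cos (r * (t - α)) * r with hw'def
  set w'' : ℝ → ℝ := fun t => -(r * r) * Real.sin (r * (t - α)) with hw''def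
  have hlin : ∀ t : ℝ, HasDerivAt (fun t => r * (t - α)) r t := by
    intro t
    simpa using ((hasDerivAt_id t).sub_const α).const_mul r
  have hw : ∀ t, HasDerivAt w (w' t) t := by
    intro t
    simpa [hw'def] using (hlin t).sin
  have hw' : ∀ t, HasDerivAt w' (w'' t) t := by
    intro t
    have h := ((hlin t).cos).mul_const r
    exact h.congr_deriv (by show _ = -(r * r) * Real.sin (r * (t - α)); ring)
  have hw''c : Continuous w'' := by
    simp only [hw''def]; fun_prop
  have hwc : Continuous w := by simp only [hwdef]; fun_prop
  have hUc : Continuous U := continuous_iff_continuousAt.mpr fun t => (hU' t).continuousAt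
  have hVc : Continuous V := by
    have : V = fun t => V α - ∫ s in α..t, g s := funext hVeq
    rw [this]
    exact continuous_const.sub (hg.continuous_primitive α)
  -- positivity of V on the open interval
  have hVpos : ∀ t ∈ Ioo α β, 0 < V t := by
    rcases nq_sign hVc Set.ordConnected_Ioo hVne with h | h
    · exact h
    · exfalso
      set γ0 := (α + β) / 2 with hγ0
      have hγ0m : γ0 ∈ Ioo α β := ⟨by simp only [hγ0]; linarith, by simp only [hγ0]; linarith⟩
      have hftc : ∫ t in α..γ0, V t = U γ0 - U α :=
        intervalIntegral.integral_eq_sub_of_hasDerivAt (fun t _ => hU' t)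
          (hVc.intervalIntegrable α γ0)
      have hneg : 0 < ∫ t in α..γ0, -V t := by
        apply intervalIntegral_pos_of_pos_on ((hVc.neg).intervalIntegrable α γ0)
        · intro t ht
          have : V t < 0 := h t ⟨ht.1, ht.2.trans hγ0m.2⟩
          show 0 < -V t
          linarith
        · exact hγ0m.1
      rw [intervalIntegral.integral_neg] at hneg
      have hU0 : 0 < U γ0 := hUpos γ0 ⟨hγ0m.1, hγ0m.2.le⟩
      rw [hftc, hUα] at hneg
      linarith
  have hUnn : ∀ t ∈ Ioc α β, 0 ≤ U t := fun t ht => (hUpos t ht).le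
  have hWid : ∀ γ, α ≤ γ → V γ * w γ - U γ * w' γ
      = ∫ t in α..γ, (-(g t) * w t - U t * w'' t) := by
    intro γ hγ
    have h := nq_wronskian hγ hU' hg hVeq hw hw' hw''c
    have hwα : w α = 0 := by simp [hwdef]
    rw [hwα, hUα] at h
    simpa using h
  have hptw : ∀ t, aa t * U t * w t + U t * w'' t = (aa t - lam) * (U t * w t) := by
    intro t
    simp only [hw''def, hwdef, hlam]
    ring
  have haeint : ∀ γ, α < γ → γ ≤ β → γ - α ≤ π / (2 * r) →
      (∫ t in α..γ, (-(g t) * w t - U t * w'' t)) ≤ 0 := by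
    intro γ hαγ hγβ hγq
    have hsub : Ioc α γ ⊆ Ioc α β := Ioc_subset_Ioc_right hγβ
    have hag2 := ae_restrict_of_ae_restrict_of_subset hsub hag
    have hal2 := ae_restrict_of_ae_restrict_of_subset hsub halam
    have hnn : 0 ≤ᵐ[volume.restrict (Icc α γ)]
        fun t => -(-(g t) * w t - U t * w'' t) := by
      apply nq_ae_Icc
      filter_upwards [hag2, hal2, ae_restrict_mem measurableSet_Ioc] with t h1 h2 ht
      have hb1 : 0 < r * (t - α) := mul_pos hr (by linarith [ht.1])
      have hb2 : r * (t - α) ≤ r * (π / (2 * r)) :=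
        mul_le_mul_of_nonneg_left (by linarith [ht.2, hγq]) hr.le
      have hwt : 0 ≤ w t := by
        apply Real.sin_nonneg_of_nonneg_of_le_pi hb1.le
        nlinarith [Real.pi_pos, h2r]
      have hUt : 0 ≤ U t := hUnn t (hsub ht)
      have he : -(-(g t) * w t - U t * w'' t) = (aa t - lam) * (U t * w t) := by
        rw [h1]; rw [← hptw t]; ring
      rw [he]
      exact mul_nonneg (by linarith) (mul_nonneg hUt hwt)
    have h0 := intervalIntegral.integral_nonneg_of_ae_restrict hαγ.le hnn
    have hInt : IntervalIntegrable (fun t => -(g t) * w t - U t * w'' t) volume α γ := by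
      apply IntervalIntegrable.sub _ ((hUc.mul hw''c).intervalIntegrable α γ)
      have : IntervalIntegrable (fun t => g t * w t) volume α γ :=
        IntervalIntegrable.mul_continuousOn hg.intervalIntegrable hwc.continuousOn
      simp only [neg_mul]
      exact this.neg
    rw [intervalIntegral.integral_neg] at h0
    linarith [h0]
  have part1 : β - α ≤ π / (2 * r) := by
    by_contra hcon
    push_neg at hcon
    set γ := α + π / (2 * r) with hγdef
    have hγ1 : α < γ := by simp only [hγdef, lt_add_iff_pos_right]; positivity
    have hγ2 : γ < β := by simp only [hγdef]; linarith
    have harg : r * (γ - α) = π / 2 := by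
      have : γ - α = π / (2 * r) := by simp [hγdef]
      rw [this, h2r]
    have hwγ : w γ = 1 := by
      simp only [hwdef, harg, Real.sin_pi_div_two]
    have hw'γ : w' γ = 0 := by
      simp only [hw'def, harg, Real.cos_pi_div_two]; ring
    have hid := hWid γ hγ1.le
    rw [hwγ, hw'γ] at hid
    have hle := haeint γ hγ1 hγ2.le (by simp [hγdef])
    have hVγ : 0 < V γ := hVpos γ ⟨hγ1, hγ2⟩
    rw [← hid] at hle
    nlinarith
  refine ⟨part1, fun hvol => ?_⟩
  rcases lt_or_eq_of_le part1 with h | heq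
  · exact h
  exfalso
  have harg : r * (β - α) = π / 2 := by rw [heq, h2r]
  have hwβ : w β = 1 := by simp only [hwdef, harg, Real.sin_pi_div_two]
  have hw'β : w' β = 0 := by simp only [hw'def, harg, Real.cos_pi_div_two]; ring
  have hid := hWid β hαβ.le
  rw [hwβ, hw'β, hVβ] at hid
  simp only [zero_mul, mul_zero, sub_zero, zero_sub, neg_eq_zero] at hid
  have hid' : (0:ℝ) = ∫ t in α..β, (-(g t) * w t - U t * w'' t) := by
    linarith [hid]
  set F2 : ℝ → ℝ := fun t => g t * w t + U t * w'' t with hF2def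
  have hnn : 0 ≤ᵐ[volume.restrict (Ioc α β)] F2 := by
    filter_upwards [hag, halam, ae_restrict_mem measurableSet_Ioc] with t h1 h2 ht
    have hb1 : 0 < r * (t - α) := mul_pos hr (by linarith [ht.1])
    have hb2 : r * (t - α) ≤ r * (π / (2 * r)) :=
      mul_le_mul_of_nonneg_left (by linarith [ht.2, heq.le]) hr.le
    have hwt : 0 ≤ w t := by
      apply Real.sin_nonneg_of_nonneg_of_le_pi hb1.le
      nlinarith [Real.pi_pos, h2r]
    have hUt : 0 ≤ U t := hUnn t ht
    have he : F2 t = (aa t - lam) * (U t * w t) := by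
      simp only [hF2def]; rw [h1, hptw t]
    rw [he]
    exact mul_nonneg (by linarith) (mul_nonneg hUt hwt)
  have hint : IntegrableOn F2 (Ioc α β) := by
    have hi1 : IntegrableOn (fun t => g t * w t) (Ioc α β) :=
      IntegrableOn.mul_continuousOn_of_subset hg.integrableOn hwc.continuousOn
        measurableSet_Ioc isCompact_Icc Ioc_subset_Icc_self
    have hi2 : IntegrableOn (fun t => U t * w'' t) (Ioc α β) :=
      ((hUc.mul hw''c).intervalIntegrable α β).1
    exact hi1.add hi2
  have hag' : ∀ᵐ t : ℝ ∂volume, t ∈ Ioc α β → g t = aa t * U t :=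
    (ae_restrict_iff' measurableSet_Ioc).mp hag
  have halam' : ∀ᵐ t : ℝ ∂volume, t ∈ Ioc α β → lam ≤ aa t :=
    (ae_restrict_iff' measurableSet_Ioc).mp halam
  have hboth : ∀ᵐ t : ℝ ∂volume, t ∈ Ioc α β → (g t = aa t * U t ∧ lam ≤ aa t) := by
    filter_upwards [hag', halam'] with t h1 h2 ht
    exact ⟨h1 ht, h2 ht⟩
  set T : Set ℝ := {t | ¬ (t ∈ Ioc α β → (g t = aa t * U t ∧ lam ≤ aa t))} with hTdef
  have hT : volume T = 0 := ae_iff.mp hboth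
  set S : Set ℝ := Ioo α β ∩ {t | lam < aa t} with hSdef
  have hST : volume (S \ T) = volume S := measure_diff_null hT
  have hsub2 : S \ T ⊆ Function.support F2 ∩ Ioc α β := by
    rintro t ⟨⟨htIoo, htA⟩, htT⟩
    simp only [hTdef, mem_setOf_eq, not_not] at htT
    have htIoc : t ∈ Ioc α β := ⟨htIoo.1, htIoo.2.le⟩
    have hP : g t = aa t * U t ∧ lam ≤ aa t := htT htIoc
    have htA' : lam < aa t := htA
    have hb1 : 0 < r * (t - α) := mul_pos hr (by linarith [htIoo.1])
    have hb2 : r * (t - α) < r * (π / (2 * r)) :=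
      mul_lt_mul_of_pos_left (by linarith [htIoo.2, heq.le]) hr
    have hwt : 0 < w t := by
      apply Real.sin_pos_of_pos_of_lt_pi hb1
      nlinarith [Real.pi_pos, h2r]
    have hUt : 0 < U t := hUpos t htIoc
    have he : F2 t = (aa t - lam) * (U t * w t) := by
      simp only [hF2def]; rw [hP.1, hptw t]
    refine ⟨?_, htIoc⟩
    rw [Function.mem_support, he]
    have : 0 < (aa t - lam) * (U t * w t) :=
      mul_pos (by linarith [htA']) (mul_pos hUt hwt)
    exact ne_of_gt this
  have hsupp : 0 < volume (Function.support F2 ∩ Ioc α β) := by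
    calc 0 < volume S := hvol
    _ = volume (S \ T) := hST.symm
    _ ≤ volume (Function.support F2 ∩ Ioc α β) := measure_mono hsub2
  have hpos := (setIntegral_pos_iff_support_of_nonneg_ae hnn hint).mpr hsupp
  have hzero : ∫ t in Ioc α β, F2 t = 0 := by
    have h1 : ∫ t in α..β, F2 t = - ∫ t in α..β, (-(g t) * w t - U t * w'' t) := by
      rw [← intervalIntegral.integral_neg]
      exact intervalIntegral.integral_congr fun t _ => by simp only [hF2def]; ring
    rw [← intervalIntegral.integral_of_le hαβ.le, h1, ← hid']
    ring
  rw [hzero] at hpos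
  exact lt_irrefl 0 hpos
lemma nq_gapA' {lam r : ℝ} {aa U V g : ℝ → ℝ} {α β : ℝ}
    (hαβ : α < β) (hr : 0 < r) (hlam : lam = r ^ 2)
    (hU' : ∀ t, HasDerivAt U (V t) t)
    (hg : Integrable g volume)
    (hVeq : ∀ t, V t = V α - ∫ s in α..t, g s)
    (hag : ∀ᵐ t ∂(volume.restrict (Ioc α β)), g t = aa t * U t)
    (halam : ∀ᵐ t ∂(volume.restrict (Ioc α β)), lam ≤ aa t)
    (hVα : V α = 0) (hUβ : U β = 0)
    (hUne : ∀ t ∈ Ico α β, U t ≠ 0) :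
    β - α ≤ π / (2 * r) ∧
      (0 < volume (Ioo α β ∩ {t | lam < aa t}) → β - α < π / (2 * r)) := by
  have hUc : Continuous U := continuous_iff_continuousAt.mpr fun t => (hU' t).continuousAt
  rcases nq_sign hUc Set.ordConnected_Ico hUne with h | h
  · exact nq_gapA hαβ hr hlam hU' hg hVeq hag halam hVα hUβ h
  · refine nq_gapA (U := fun t => -U t) (V := fun t => -V t) (g := fun t => -g t)
      hαβ hr hlam (fun t => (hU' t).neg) hg.neg ?_ ?_ halam
      (by show -V α = 0; rw [hVα]; ring) (by show -U β = 0; rw [hUβ]; ring)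
      (fun t ht => neg_pos.mpr (h t ht))
    · intro t
      show -V t = -V α - ∫ s in α..t, -(g s)
      rw [intervalIntegral.integral_neg]
      linarith [hVeq t]
    · filter_upwards [hag] with t h1
      show -g t = aa t * (-U t)
      rw [h1]; ring

lemma nq_gapB' {lam r : ℝ} {aa U V g : ℝ → ℝ} {α β : ℝ}
    (hαβ : α < β) (hr : 0 < r) (hlam : lam = r ^ 2)
    (hU' : ∀ t, HasDerivAt U (V t) t)
    (hg : Integrable g volume)
    (hVeq : ∀ t, V t = V α - ∫ s in α..t, g s)
    (hag : ∀ᵐ t ∂(volume.restrict (Ioc α β)), g t = aa t * U t)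
    (halam : ∀ᵐ t ∂(volume.restrict (Ioc α β)), lam ≤ aa t)
    (hUα : U α = 0) (hVβ : V β = 0)
    (hUne : ∀ t ∈ Ioc α β, U t ≠ 0)
    (hVne : ∀ t ∈ Ioo α β, V t ≠ 0) :
    β - α ≤ π / (2 * r) ∧
      (0 < volume (Ioo α β ∩ {t | lam < aa t}) → β - α < π / (2 * r)) := by
  have hUc : Continuous U := continuous_iff_continuousAt.mpr fun t => (hU' t).continuousAt
  rcases nq_sign hUc Set.ordConnected_Ioc hUne with h | h
  · exact nq_gapB hαβ hr hlam hU' hg hVeq hag halam hUα hVβ h hVne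
  · refine nq_gapB (U := fun t => -U t) (V := fun t => -V t) (g := fun t => -g t)
      hαβ hr hlam (fun t => (hU' t).neg) hg.neg ?_ ?_ halam
      (by show -U α = 0; rw [hUα]; ring) (by show -V β = 0; rw [hVβ]; ring)
      (fun t ht => neg_pos.mpr (h t ht))
      (fun t ht => neg_ne_zero.mpr (hVne t ht))
    · intro t
      show -V t = -V α - ∫ s in α..t, -(g s)
      rw [intervalIntegral.integral_neg]
      linarith [hVeq t]
    · filter_upwards [hag] with t h1
      show -g t = aa t * (-U t)
      rw [h1]; ring
lemma nq_int {L : ℝ} (hL : 0 < L) {a u v : ℝ → ℝ}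
    (ha : IntegrableOn a (Ioo 0 L))
    (hu : ∀ t ∈ Icc (0:ℝ) L, u t = u 0 + ∫ s in (0:ℝ)..t, v s)
    (hv : ∀ t ∈ Icc (0:ℝ) L, v t = - ∫ s in (0:ℝ)..t, a s * u s)
    (hfin : {t | t ∈ Icc (0:ℝ) L ∧ v t = 0}.Finite) :
    IntegrableOn (fun s => a s * u s) (Ioo 0 L) := by
  set g : ℝ → ℝ := fun s => a s * u s with hgdef
  -- Step 1: g is integrable on Ioc 0 t for every t < L
  have key1 : ∀ t ∈ Ico (0:ℝ) L, IntegrableOn g (Ioc 0 t) := by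
    by_contra hc
    push_neg at hc
    obtain ⟨t, ht, hni⟩ := hc
    have hz : ∀ r ∈ Icc t L, v r = 0 := by
      intro r hr
      have h1 : ¬ IntegrableOn g (Ioc 0 r) := fun h =>
        hni (h.mono_set (Ioc_subset_Ioc_right hr.1))
      have h2 : ∫ s in (0:ℝ)..r, g s = 0 := by
        rw [intervalIntegral.integral_of_le (le_trans ht.1 hr.1)]
        exact integral_undef h1
      rw [hv r ⟨le_trans ht.1 hr.1, hr.2⟩, h2, neg_zero]
    have hsubz : Icc t L ⊆ {t | t ∈ Icc (0:ℝ) L ∧ v t = 0} := fun r hr =>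
      ⟨⟨le_trans ht.1 hr.1, hr.2⟩, hz r hr⟩
    exact (Set.Icc_infinite ht.2) (hfin.subset hsubz)
  -- Step 2: continuity of v and u on Icc 0 b for b < L
  have key2 : ∀ b ∈ Ico (0:ℝ) L, ContinuousOn v (Icc 0 b) ∧ ContinuousOn u (Icc 0 b) := by
    intro b hb
    have hgi : IntegrableOn g (Icc 0 b) :=
      (integrableOn_Icc_iff_integrableOn_Ioc).mpr (key1 b hb)
    have hvc : ContinuousOn v (Icc 0 b) := by
      refine ContinuousOn.congr (intervalIntegral.continuousOn_primitive hgi).neg ?_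
      intro t htm
      rw [hv t ⟨htm.1, le_trans htm.2 hb.2.le⟩, intervalIntegral.integral_of_le htm.1]; rfl
    have hvci : IntegrableOn v (Icc 0 b) := hvc.integrableOn_Icc
    have huc : ContinuousOn u (Icc 0 b) := by
      refine ContinuousOn.congr
        ((continuousOn_const (c := u 0)).add (intervalIntegral.continuousOn_primitive hvci)) ?_
      intro t htm
      rw [hu t ⟨htm.1, le_trans htm.2 hb.2.le⟩, intervalIntegral.integral_of_le htm.1]; rfl
    exact ⟨hvc, huc⟩
  -- Step 3: choose t0 < L with small tail integral of |a|
  have haabs : IntegrableOn (fun s => |a s|) (Icc 0 L) := by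
    rw [integrableOn_Icc_iff_integrableOn_Ioo]
    exact ha.abs
  set ε := 1 / (2 * (L + 1)) with hεdef
  have hεpos : 0 < ε := by positivity
  have hεL : ε * L ≤ 1 / 2 := by
    rw [hεdef]
    rw [div_mul_eq_mul_div, div_le_div_iff₀ (by positivity) (by norm_num)]
    nlinarith
  have hFc := intervalIntegral.continuousOn_primitive (a := (0:ℝ)) (b := L) haabs
  have hLc : L ∈ closure (Ioo 0 L) := by
    rw [closure_Ioo hL.ne]; exact ⟨hL.le, le_refl L⟩
  have hne : (nhdsWithin L (Ioo 0 L)).NeBot := mem_closure_iff_nhdsWithin_neBot.mp hLc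
  have hcw : Filter.Tendsto (fun x => ∫ s in Ioc 0 x, |a s|) (nhdsWithin L (Ioo 0 L))
      (nhds (∫ s in Ioc 0 L, |a s|)) :=
    (hFc L ⟨hL.le, le_refl L⟩).mono_of_mem_nhdsWithin
      (Filter.mem_of_superset self_mem_nhdsWithin Ioo_subset_Icc_self)
  have hev := (Metric.tendsto_nhds.mp hcw ε hεpos).and self_mem_nhdsWithin
  obtain ⟨t0, ht0d, ht0m⟩ := hev.exists
  -- t0 ∈ Ioo 0 L, and the tail integral over Ioc t0 L is < ε
  have hii0 : ∀ p q : ℝ, 0 ≤ p → p ≤ q → q ≤ L → IntervalIntegrable (fun s => |a s|) volume p q := by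
    intro p q hp hpq hqL
    refine (intervalIntegrable_iff_integrableOn_Ioc_of_le hpq).mpr ?_
    exact haabs.mono_set (fun s hs => ⟨le_trans hp hs.1.le, le_trans hs.2 hqL⟩)
  have htail : ∫ s in t0..L, |a s| < ε := by
    have hadd := intervalIntegral.integral_add_adjacent_intervals
      (hii0 0 t0 (le_refl 0) ht0m.1.le ht0m.2.le) (hii0 t0 L ht0m.1.le ht0m.2.le (le_refl L))
    have hd := ht0d
    rw [Real.dist_eq] at hd
    have h1 : ∫ s in Ioc 0 t0, |a s| = ∫ s in (0:ℝ)..t0, |a s| :=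
      (intervalIntegral.integral_of_le ht0m.1.le).symm
    have h2 : ∫ s in Ioc 0 L, |a s| = ∫ s in (0:ℝ)..L, |a s| :=
      (intervalIntegral.integral_of_le hL.le).symm
    rw [h1, h2] at hd
    have habs := abs_lt.mp hd
    linarith [habs.1, hadd]
  have htailnn : 0 ≤ ∫ s in t0..L, |a s| :=
    intervalIntegral.integral_nonneg ht0m.2.le (fun s _ => abs_nonneg _)
  -- Step 4: uniform bound K for |u| on [t0, L)
  set C := |u t0| + (L + 1) * |v t0| with hCdef
  have hCnn : 0 ≤ C := by positivity
  have hCle : |u t0| ≤ C := by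
    rw [hCdef]
    nlinarith [mul_nonneg (by linarith : (0:ℝ) ≤ L + 1) (abs_nonneg (v t0))]
  set K := 2 * C + 2 with hKdef
  have hKpos : 0 < K := by positivity
  have hbd : ∀ b ∈ Ico t0 L, ∀ r ∈ Icc t0 b, |u r| ≤ K := by
    intro b hb
    have hbIco : b ∈ Ico (0:ℝ) L := ⟨le_trans ht0m.1.le hb.1, hb.2⟩
    obtain ⟨hvc, huc⟩ := key2 b hbIco
    set Sset := {τ | τ ∈ Icc t0 b ∧ ∀ r ∈ Icc t0 τ, |u r| ≤ K} with hSs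
    have ht0S : t0 ∈ Sset := by
      refine ⟨⟨le_refl t0, hb.1⟩, fun r hr => ?_⟩
      have : r = t0 := le_antisymm hr.2 hr.1
      rw [this]
      calc |u t0| ≤ C := hCle
      _ ≤ K := by rw [hKdef]; linarith
    have hSne : Sset.Nonempty := ⟨t0, ht0S⟩
    have hbdd : BddAbove Sset :=
      BddAbove.mono (fun y hy => hy.1) bddAbove_Icc
    set τ := sSup Sset with hτdef
    have hτ1 : t0 ≤ τ := le_csSup hbdd ht0S
    have hτ2 : τ ≤ b := csSup_le hSne fun y hy => hy.1.2
    have hless : ∀ r ∈ Ico t0 τ, |u r| ≤ K := by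
      intro r hr
      obtain ⟨s', hs'S, hrs'⟩ := exists_lt_of_lt_csSup hSne hr.2
      exact hs'S.2 r ⟨hr.1, hrs'.le⟩
    have hτbound : ∀ r ∈ Icc t0 τ, |u r| ≤ K := by
      intro r hr
      rcases lt_or_eq_of_le hr.2 with hlt | hEq
      · exact hless r ⟨hr.1, hlt⟩
      · rcases eq_or_lt_of_le hτ1 with hteq | htlt
        · have : r = t0 := by rw [hEq, ← hteq]
          rw [this]
          calc |u t0| ≤ C := hCle
          _ ≤ K := by rw [hKdef]; linarith
        · have hclos : τ ∈ closure (Ico t0 τ) := by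
            rw [closure_Ico (ne_of_lt htlt)]; exact ⟨hτ1, le_refl τ⟩
          have hne2 : (nhdsWithin τ (Ico t0 τ)).NeBot :=
            mem_closure_iff_nhdsWithin_neBot.mp hclos
          have htd : Filter.Tendsto u (nhdsWithin τ (Ico t0 τ)) (nhds (u τ)) := by
            refine (huc τ ⟨le_trans ht0m.1.le hτ1, hτ2⟩).mono_of_mem_nhdsWithin
              (Filter.mem_of_superset self_mem_nhdsWithin ?_)
            intro s hs
            exact ⟨le_trans ht0m.1.le hs.1, le_trans hs.2.le hτ2⟩
          rw [hEq]
          refine le_of_tendsto htd.abs ?_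
          filter_upwards [self_mem_nhdsWithin] with s hs using hless s hs
    have hquant : ∀ r ∈ Icc t0 τ, |u r| ≤ K - 1 := by
      intro r hr
      have hrL : r ≤ b := le_trans hr.2 hτ2
      have hr0L : r ∈ Icc (0:ℝ) L := ⟨le_trans ht0m.1.le hr.1, le_trans hrL hb.2.le⟩
      have hiig : ∀ p q : ℝ, 0 ≤ p → p ≤ q → q < L → IntervalIntegrable g volume p q := by
        intro p q hp hpq hqL
        refine (intervalIntegrable_iff_integrableOn_Ioc_of_le hpq).mpr ?_
        exact (key1 q ⟨le_trans hp hpq, hqL⟩).mono_set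
          (fun s hs => ⟨lt_of_le_of_lt hp hs.1, hs.2⟩)
      have hrltL : r < L := lt_of_le_of_lt hrL hb.2
      -- bound for |v p| on Icc t0 r
      have hvb : ∀ p ∈ Icc t0 r, |v p| ≤ |v t0| + K * ε := by
        intro p hp
        have hpL : p < L := lt_of_le_of_lt hp.2 hrltL
        have hp0 : (0:ℝ) ≤ p := le_trans ht0m.1.le hp.1
        have hadd := intervalIntegral.integral_add_adjacent_intervals
          (hiig 0 t0 (le_refl 0) ht0m.1.le ht0m.2) (hiig t0 p ht0m.1.le hp.1 hpL)
        have hvp := hv p ⟨hp0, hpL.le⟩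
        have hvt0 := hv t0 ⟨ht0m.1.le, ht0m.2.le⟩
        have hsplit : v p = v t0 - ∫ s in t0..p, g s := by
          rw [hvp, hvt0, ← hadd]; ring
        have hb1 : |∫ s in t0..p, g s| ≤ ∫ s in t0..p, K * |a s| := by
          refine (intervalIntegral.abs_integral_le_integral_abs hp.1).trans ?_
          refine intervalIntegral.integral_mono_on hp.1 ?_ ?_ ?_
          · exact (hiig t0 p ht0m.1.le hp.1 hpL).abs
          · exact (hii0 t0 p ht0m.1.le hp.1 hpL.le).const_mul K
          · intro s hs
            have hsub : |u s| ≤ K := hτbound s ⟨hs.1, le_trans (le_trans hs.2 hp.2) hr.2⟩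
            have : |g s| = |a s| * |u s| := abs_mul _ _
            rw [this, mul_comm (K : ℝ) (|a s|)]
            exact mul_le_mul_of_nonneg_left hsub (abs_nonneg _)
        have hb2 : ∫ s in t0..p, K * |a s| = K * ∫ s in t0..p, |a s| := by
          rw [intervalIntegral.integral_const_mul]
        have hb3 : ∫ s in t0..p, |a s| ≤ ∫ s in t0..L, |a s| := by
          have hadd2 := intervalIntegral.integral_add_adjacent_intervals
            (hii0 t0 p ht0m.1.le hp.1 hpL.le) (hii0 p L hp0 hpL.le (le_refl L))
          have hnn : 0 ≤ ∫ s in p..L, |a s| :=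
            intervalIntegral.integral_nonneg hpL.le (fun s _ => abs_nonneg _)
          linarith
        have : |∫ s in t0..p, g s| ≤ K * ε := by
          calc |∫ s in t0..p, g s| ≤ ∫ s in t0..p, K * |a s| := hb1
          _ = K * ∫ s in t0..p, |a s| := hb2
          _ ≤ K * ∫ s in t0..L, |a s| := by
              apply mul_le_mul_of_nonneg_left hb3 hKpos.le
          _ ≤ K * ε := by
              apply mul_le_mul_of_nonneg_left htail.le hKpos.le
        rw [hsplit]
        calc |v t0 - ∫ s in t0..p, g s| ≤ |v t0| + |∫ s in t0..p, g s| := abs_sub _ _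
        _ ≤ |v t0| + K * ε := by linarith
      -- now bound |u r|
      have hvir : IntervalIntegrable v volume t0 r := by
        apply ContinuousOn.intervalIntegrable
        have huIcc : uIcc t0 r = Icc t0 r := uIcc_of_le hr.1
        rw [huIcc]
        exact hvc.mono (fun s hs => ⟨le_trans ht0m.1.le hs.1, le_trans hs.2 hrL⟩)
      have hvi0 : IntervalIntegrable v volume 0 t0 := by
        apply ContinuousOn.intervalIntegrable
        have huIcc : uIcc 0 t0 = Icc 0 t0 := uIcc_of_le ht0m.1.le
        rw [huIcc]
        exact hvc.mono (fun s hs => ⟨hs.1, le_trans hs.2 (le_trans hr.1 hrL)⟩)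
      have hadd3 := intervalIntegral.integral_add_adjacent_intervals hvi0 hvir
      have hur := hu r hr0L
      have hut0 := hu t0 ⟨ht0m.1.le, ht0m.2.le⟩
      have hsplit2 : u r = u t0 + ∫ s in t0..r, v s := by
        rw [hur, hut0, ← hadd3]; ring
      have hb4 : |∫ s in t0..r, v s| ≤ (|v t0| + K * ε) * |r - t0| := by
        have hb4' := intervalIntegral.norm_integral_le_of_norm_le_const
          (C := |v t0| + K * ε) (f := v) (a := t0) (b := r) ?_
        · rwa [Real.norm_eq_abs] at hb4'
        · intro s hs
          rw [uIoc_of_le hr.1] at hs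
          rw [Real.norm_eq_abs]
          exact hvb s ⟨hs.1.le, hs.2⟩
      have habsr : |r - t0| = r - t0 := abs_of_nonneg (by linarith [hr.1])
      rw [habsr] at hb4
      have hrt0L : r - t0 ≤ L := by
        have := hr0L.2
        linarith [ht0m.1]
      have hvKε : 0 ≤ |v t0| + K * ε := by positivity
      have hest : (|v t0| + K * ε) * (r - t0) ≤ (L + 1) * |v t0| + K / 2 := by
        have e1 : (|v t0| + K * ε) * (r - t0) = |v t0| * (r - t0) + K * (ε * (r - t0)) := by ring
        have e2 : |v t0| * (r - t0) ≤ |v t0| * (L + 1) :=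
          mul_le_mul_of_nonneg_left (by linarith) (abs_nonneg _)
        have e3 : ε * (r - t0) ≤ ε * L := mul_le_mul_of_nonneg_left hrt0L hεpos.le
        have e4 : K * (ε * (r - t0)) ≤ K * (1/2) := by
          apply mul_le_mul_of_nonneg_left _ hKpos.le
          linarith [hεL]
        nlinarith
      have : |u r| ≤ |u t0| + (|v t0| + K * ε) * (r - t0) := by
        rw [hsplit2]
        calc |u t0 + ∫ s in t0..r, v s| ≤ |u t0| + |∫ s in t0..r, v s| := abs_add_le _ _
        _ ≤ |u t0| + (|v t0| + K * ε) * (r - t0) := by linarith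
      rw [hKdef, hCdef] at *
      linarith
    have hτb : τ = b := by
      by_contra hne3
      have hτltb : τ < b := lt_of_le_of_ne hτ2 hne3
      have hcwu : ContinuousWithinAt u (Icc 0 b) τ := huc τ ⟨le_trans ht0m.1.le hτ1, hτ2⟩
      have hKlt : |u τ| < K := by
        have := hquant τ ⟨hτ1, le_refl τ⟩
        linarith
      have hevu : ∀ᶠ s in nhdsWithin τ (Icc 0 b), |u s| < K :=
        Filter.Tendsto.eventually_lt_const hKlt hcwu.abs
      obtain ⟨δ, hδpos, hδ⟩ := Metric.mem_nhdsWithin_iff.mp hevu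
      set t' := min b (τ + δ / 2) with ht'def
      have hτt' : τ < t' := by
        rw [ht'def]
        apply lt_min hτltb
        linarith
      have ht'b : t' ≤ b := min_le_left _ _
      have ht'S : t' ∈ Sset := by
        refine ⟨⟨le_trans hτ1 hτt'.le, ht'b⟩, fun r hr => ?_⟩
        rcases le_or_gt r τ with h | h
        · exact hτbound r ⟨hr.1, h⟩
        · have hrd : dist r τ < δ := by
            rw [Real.dist_eq, abs_of_nonneg (by linarith)]
            have : r ≤ τ + δ / 2 := le_trans hr.2 (min_le_right _ _)
            linarith
          have hrIcc : r ∈ Icc (0:ℝ) b :=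
            ⟨le_trans (le_trans ht0m.1.le hr.1) (le_refl r), le_trans hr.2 ht'b⟩
          exact (hδ ⟨Metric.mem_ball.mpr hrd, hrIcc⟩).le
      have : t' ≤ τ := le_csSup hbdd ht'S
      linarith
    intro r hr
    exact hτbound r (by rw [hτb]; exact hr)
  have hubdd : ∀ t ∈ Ico t0 L, |u t| ≤ K := fun t ht => hbd t ht t ⟨ht.1, le_refl t⟩
  -- Step 5: u measurable on Ico 0 L
  have hucIco : ContinuousOn u (Ico 0 L) := by
    intro t ht
    have hmid : (t + L) / 2 ∈ Ico (0:ℝ) L := ⟨by linarith [ht.1], by linarith [ht.2]⟩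
    have h2 : t < (t + L) / 2 := by linarith [ht.2]
    refine ((key2 _ hmid).2 t ⟨ht.1, h2.le⟩).mono_of_mem_nhdsWithin ?_
    refine Filter.mem_of_superset
      (Filter.inter_mem self_mem_nhdsWithin
        (mem_nhdsWithin_of_mem_nhds (Iio_mem_nhds h2))) ?_
    intro s hs
    exact ⟨hs.1.1, hs.2.le⟩
  have hmeasu : AEStronglyMeasurable u (volume.restrict (Ioo t0 L)) := by
    refine (hucIco.mono ?_).aestronglyMeasurable measurableSet_Ioo
    intro s hs
    exact ⟨le_of_lt (lt_trans ht0m.1 hs.1), hs.2⟩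
  have hai : IntegrableOn a (Ioo t0 L) := ha.mono_set (Ioo_subset_Ioo_left ht0m.1.le)
  have hInt2 : IntegrableOn g (Ioo t0 L) := by
    refine Integrable.mono' (hai.abs.const_mul K) (hai.aestronglyMeasurable.mul hmeasu) ?_
    rw [ae_restrict_iff' measurableSet_Ioo]
    apply Filter.Eventually.of_forall
    intro s hs
    have hsb : |u s| ≤ K := hubdd s ⟨hs.1.le, hs.2⟩
    have : ‖a s * u s‖ = |a s| * |u s| := by rw [Real.norm_eq_abs, abs_mul]
    rw [this, mul_comm (K : ℝ) (|a s|)]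
    exact mul_le_mul_of_nonneg_left hsb (abs_nonneg _)
  have hcover : Ioo (0:ℝ) L ⊆ Ioc 0 t0 ∪ Ioo t0 L := by
    intro s hs
    rcases le_or_gt s t0 with h | h
    · exact Or.inl ⟨hs.1, h⟩
    · exact Or.inr ⟨h, hs.2⟩
  exact ((key1 t0 ⟨ht0m.1.le, ht0m.2⟩).union hInt2).mono_set hcover

/-- if λₙ ≺ a and u is a nontrivial solution of the Neumann problem
u'' + au = 0, u'(0) = u'(L) = 0 (v being u'), whose derivative's zeros in [0,L] are
0 = x₀ < x₂ < … < x_{2m} = L and whose zeros interlace as x₁ < x₃ < … < x_{2m-1},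
then m ≥ n + 1. -/
theorem number_of_zeros_ge (L : ℝ) (hL : 0 < L) (n : ℕ) (hn : 1 ≤ n)
    (a u v : ℝ → ℝ) (m : ℕ) (hm : 1 ≤ m) (x : ℕ → ℝ)
    (ha : IntegrableOn a (Ioo 0 L))
    (hprec₁ : ∀ᵐ t ∂(volume.restrict (Ioo 0 L)), (n : ℝ) ^ 2 * π ^ 2 / L ^ 2 ≤ a t)
    (hprec₂ : 0 < volume (Ioo 0 L ∩ {t | (n : ℝ) ^ 2 * π ^ 2 / L ^ 2 < a t}))
    (hu : ∀ t ∈ Icc (0:ℝ) L, u t = u 0 + ∫ s in (0:ℝ)..t, v s)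
    (hv : ∀ t ∈ Icc (0:ℝ) L, v t = - ∫ s in (0:ℝ)..t, a s * u s)
    (hvL : v L = 0)
    (hnontriv : ∃ t ∈ Icc (0:ℝ) L, u t ≠ 0)
    (hmono : StrictMonoOn x (Iic (2 * m)))
    (hx0 : x 0 = 0) (hxL : x (2 * m) = L)
    (hrange : ∀ i ≤ 2 * m, x i ∈ Icc (0:ℝ) L)
    (hzv : ∀ i ≤ 2 * m, Even i → v (x i) = 0)
    (hzu : ∀ i ≤ 2 * m, Odd i → u (x i) = 0)
    (hallv : ∀ t ∈ Icc (0:ℝ) L, v t = 0 → ∃ i ≤ 2 * m, Even i ∧ t = x i)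
    (hallu : ∀ t ∈ Icc (0:ℝ) L, u t = 0 → ∃ i ≤ 2 * m, Odd i ∧ t = x i) :
    m ≥ n + 1 := by
  classical
  set lam : ℝ := (n : ℝ) ^ 2 * π ^ 2 / L ^ 2 with hlamdef
  set r : ℝ := (n : ℝ) * π / L with hrdef
  have hnpos : (0:ℝ) < n := by exact_mod_cast hn
  have hr : 0 < r := by rw [hrdef]; positivity
  have hlam : lam = r ^ 2 := by
    rw [hlamdef, hrdef, div_pow, mul_pow]
  have hq : π / (2 * r) = L / (2 * n) := by
    rw [hrdef]
    field_simp
  -- finiteness of zeros of v, then integrability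
  have hfin : {t | t ∈ Icc (0:ℝ) L ∧ v t = 0}.Finite := by
    refine ((Set.finite_Iic (2 * m)).image x).subset ?_
    rintro t ⟨htm, htz⟩
    obtain ⟨i, hi, _, hti⟩ := hallv t htm htz
    exact ⟨i, by simpa using hi, hti.symm⟩
  have hgint : IntegrableOn (fun s => a s * u s) (Ioo 0 L) := nq_int hL ha hu hv hfin
  set gg : ℝ → ℝ := (Ioo (0:ℝ) L).indicator (fun s => a s * u s) with hggdef
  have hgg : Integrable gg volume :=
    (integrable_indicator_iff measurableSet_Ioo).mpr hgint
  set V : ℝ → ℝ := fun t => - ∫ s in (0:ℝ)..t, gg s with hVdef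
  have hVc : Continuous V := (hgg.continuous_primitive 0).neg
  have hVeq : ∀ α' t : ℝ, V t = V α' - ∫ s in α'..t, gg s := by
    intro α' t
    have hadd := intervalIntegral.integral_add_adjacent_intervals
      (hgg.intervalIntegrable (a := 0) (b := α')) (hgg.intervalIntegrable (a := α') (b := t))
    simp only [hVdef]
    linarith
  have haeL : ∀ᵐ s : ℝ ∂volume, s ≠ L := by
    rw [ae_iff]
    have : {s : ℝ | ¬ s ≠ L} = {L} := by ext s; simp
    rw [this]; exact measure_singleton L
  have hVv : ∀ t ∈ Icc (0:ℝ) L, V t = v t := by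
    intro t ht
    rw [hv t ht]
    have hcong : ∫ s in (0:ℝ)..t, gg s = ∫ s in (0:ℝ)..t, a s * u s := by
      rw [intervalIntegral.integral_of_le ht.1, intervalIntegral.integral_of_le ht.1]
      refine setIntegral_congr_ae measurableSet_Ioc ?_
      filter_upwards [haeL] with s hsne hsm
      have hsIoo : s ∈ Ioo (0:ℝ) L :=
        ⟨hsm.1, lt_of_le_of_ne (le_trans hsm.2 ht.2) hsne⟩
      exact indicator_of_mem hsIoo _
    simp only [hVdef]
    rw [hcong]
  set U : ℝ → ℝ := fun t => u 0 + ∫ s in (0:ℝ)..t, V s with hUdef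
  have hU' : ∀ t, HasDerivAt U (V t) t := by
    intro t
    exact ((hVc.integral_hasStrictDerivAt 0 t).hasDerivAt).const_add (u 0)
  have hUu : ∀ t ∈ Icc (0:ℝ) L, U t = u t := by
    intro t ht
    simp only [hUdef]
    have : ∫ s in (0:ℝ)..t, V s = ∫ s in (0:ℝ)..t, v s := by
      refine intervalIntegral.integral_congr ?_
      intro s hs
      rw [uIcc_of_le ht.1] at hs
      exact hVv s ⟨hs.1, le_trans hs.2 ht.2⟩
    rw [this]
    exact (hu t ht).symm
  -- properties of the partition
  have hxlt : ∀ p q : ℕ, p ≤ 2 * m → q ≤ 2 * m → p < q → x p < x q := by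
    intro p q hp hq h
    exact hmono (mem_Iic.mpr hp) (mem_Iic.mpr hq) h
  have hxle : ∀ p q : ℕ, p ≤ 2 * m → q ≤ 2 * m → p ≤ q → x p ≤ x q := by
    intro p q hp hq h
    rcases lt_or_eq_of_le h with h' | h'
    · exact (hxlt p q hp hq h').le
    · rw [h']
  have hxinj : ∀ p q : ℕ, p ≤ 2 * m → q ≤ 2 * m → x p = x q → p = q := by
    intro p q hp hq h
    exact hmono.injOn (mem_Iic.mpr hp) (mem_Iic.mpr hq) h
  -- the gap bound for each interval
  have hgap : ∀ i, i < 2 * m →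
      (x (i + 1) - x i ≤ π / (2 * r) ∧
        (0 < volume (Ioo (x i) (x (i + 1)) ∩ {t | lam < a t}) →
          x (i + 1) - x i < π / (2 * r))) := by
    intro i hi
    have hi1 : i + 1 ≤ 2 * m := hi
    have hi0 : i ≤ 2 * m := le_of_lt hi
    have hαβ : x i < x (i + 1) := hxlt i (i + 1) hi0 hi1 (lt_add_one i)
    have hα0 : (0:ℝ) ≤ x i := (hrange i hi0).1
    have hβL : x (i + 1) ≤ L := (hrange (i + 1) hi1).2
    have hIccsub : Icc (x i) (x (i + 1)) ⊆ Icc (0:ℝ) L := fun s hs =>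
      ⟨le_trans hα0 hs.1, le_trans hs.2 hβL⟩
    have hag : ∀ᵐ t ∂(volume.restrict (Ioc (x i) (x (i + 1)))), gg t = a t * U t := by
      rw [ae_restrict_iff' measurableSet_Ioc]
      filter_upwards [haeL] with t htne htm
      have htIoo : t ∈ Ioo (0:ℝ) L :=
        ⟨lt_of_le_of_lt hα0 htm.1, lt_of_le_of_ne (le_trans htm.2 hβL) htne⟩
      rw [hggdef, indicator_of_mem htIoo,
        hUu t ⟨htIoo.1.le, htIoo.2.le⟩]
    have halam2 : ∀ᵐ t ∂(volume.restrict (Ioc (x i) (x (i + 1)))), lam ≤ a t := by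
      rw [ae_restrict_iff' measurableSet_Ioc]
      have hprec₁' := (ae_restrict_iff' measurableSet_Ioo).mp hprec₁
      filter_upwards [hprec₁', haeL] with t h1 htne htm
      have htIoo : t ∈ Ioo (0:ℝ) L :=
        ⟨lt_of_le_of_lt hα0 htm.1, lt_of_le_of_ne (le_trans htm.2 hβL) htne⟩
      exact h1 htIoo
    rcases Nat.even_or_odd i with he | ho
    · -- even i : v (x i) = 0, u (x (i+1)) = 0
      have hVα : V (x i) = 0 := by
        rw [hVv (x i) (hrange i hi0)]
        exact hzv i hi0 he
      have hUβ : U (x (i + 1)) = 0 := by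
        rw [hUu (x (i + 1)) (hrange (i + 1) hi1)]
        exact hzu (i + 1) hi1 (Even.add_one he)
      have hUne : ∀ t ∈ Ico (x i) (x (i + 1)), U t ≠ 0 := by
        intro t ht hteq
        have htmem : t ∈ Icc (0:ℝ) L := hIccsub ⟨ht.1, ht.2.le⟩
        have hueq : u t = 0 := by rw [← hUu t htmem]; exact hteq
        obtain ⟨j, hj, hjodd, htj⟩ := hallu t htmem hueq
        rcases le_or_gt j i with hji | hji
        · have h1 : x j ≤ x i := hxle j i hj hi0 hji
          have h2 : x i ≤ x j := by rw [← htj]; exact ht.1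
          have := hxinj j i hj hi0 (le_antisymm h1 h2)
          rw [this] at hjodd
          exact (Nat.not_odd_iff_even.mpr he) hjodd
        · have h1 : x (i + 1) ≤ x j := hxle (i + 1) j hi1 hj hji
          rw [← htj] at h1
          exact absurd ht.2 (not_lt.mpr h1)
      have := nq_gapA' hαβ hr hlam hU' hgg (hVeq (x i)) hag halam2 hVα hUβ hUne
      exact this
    · -- odd i : u (x i) = 0, v (x (i+1)) = 0
      have hUα : U (x i) = 0 := by
        rw [hUu (x i) (hrange i hi0)]
        exact hzu i hi0 ho
      have hVβ : V (x (i + 1)) = 0 := by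
        rw [hVv (x (i + 1)) (hrange (i + 1) hi1)]
        exact hzv (i + 1) hi1 (Odd.add_one ho)
      have hUne : ∀ t ∈ Ioc (x i) (x (i + 1)), U t ≠ 0 := by
        intro t ht hteq
        have htmem : t ∈ Icc (0:ℝ) L := hIccsub ⟨ht.1.le, ht.2⟩
        have hueq : u t = 0 := by rw [← hUu t htmem]; exact hteq
        obtain ⟨j, hj, hjodd, htj⟩ := hallu t htmem hueq
        rcases le_or_gt j i with hji | hji
        · have h1 : x j ≤ x i := hxle j i hj hi0 hji
          rw [← htj] at h1
          exact absurd ht.1 (not_lt.mpr h1)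
        · have h1 : x (i + 1) ≤ x j := hxle (i + 1) j hi1 hj hji
          have h2 : x j ≤ x (i + 1) := by rw [← htj]; exact ht.2
          have := hxinj (i + 1) j hi1 hj (le_antisymm h1 h2)
          rw [← this] at hjodd
          have : Even (i + 1) := Odd.add_one ho
          exact (Nat.not_odd_iff_even.mpr this) hjodd
      have hVne : ∀ t ∈ Ioo (x i) (x (i + 1)), V t ≠ 0 := by
        intro t ht hteq
        have htmem : t ∈ Icc (0:ℝ) L := hIccsub ⟨ht.1.le, ht.2.le⟩
        have hveq : v t = 0 := by rw [← hVv t htmem]; exact hteq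
        obtain ⟨j, hj, _, htj⟩ := hallv t htmem hveq
        rcases le_or_gt j i with hji | hji
        · have h1 : x j ≤ x i := hxle j i hj hi0 hji
          rw [← htj] at h1
          exact absurd ht.1 (not_lt.mpr h1)
        · have h1 : x (i + 1) ≤ x j := hxle (i + 1) j hi1 hj hji
          rw [← htj] at h1
          exact absurd ht.2 (not_lt.mpr h1)
      exact nq_gapB' hαβ hr hlam hU' hgg (hVeq (x i)) hag halam2 hUα hVβ hUne hVne
  -- pigeonhole: some interval carries positive measure of {lam < a}
  set A : Set ℝ := {t | lam < a t} with hAdef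
  have hstrictgap : ∃ i, i < 2 * m ∧ 0 < volume (Ioo (x i) (x (i + 1)) ∩ A) := by
    by_contra hall
    push_neg at hall
    have hzero : ∀ i, i < 2 * m → volume (Ioo (x i) (x (i + 1)) ∩ A) = 0 := by
      intro i hi
      exact le_antisymm (hall i hi) zero_le
    have hcover : Ioo (0:ℝ) L ∩ A ⊆
        ⋃ i ∈ Finset.range (2 * m), (Icc (x i) (x (i + 1)) ∩ A) := by
      rintro t ⟨htI, htA⟩
      have h0t : x 0 ≤ t := by rw [hx0]; exact htI.1.le
      set J := (Finset.range (2 * m + 1)).filter (fun j => x j ≤ t) with hJ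
      have hJne : J.Nonempty := ⟨0, by simp [hJ, h0t]⟩
      set i := J.max' hJne with hidef
      have hiJ : i ∈ J := J.max'_mem hJne
      have hi2m : i ≤ 2 * m := by
        have := (Finset.mem_filter.mp hiJ).1
        rw [Finset.mem_range] at this
        omega
      have hxi : x i ≤ t := (Finset.mem_filter.mp hiJ).2
      have hilt : i < 2 * m := by
        rcases lt_or_eq_of_le hi2m with h | h
        · exact h
        · exfalso
          rw [h] at hxi
          rw [hxL] at hxi
          exact absurd htI.2 (not_lt.mpr hxi)
      have hnot : ¬ (x (i + 1) ≤ t) := by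
        intro hcon
        have hmem : i + 1 ∈ J := by
          rw [hJ, Finset.mem_filter, Finset.mem_range]
          exact ⟨by omega, hcon⟩
        have := J.le_max' (i + 1) hmem
        omega
      refine Set.mem_biUnion (Finset.mem_range.mpr hilt) ⟨⟨hxi, (not_le.mp hnot).le⟩, htA⟩
    have hle := (measure_mono hcover).trans
      (measure_biUnion_finset_le (μ := volume) (Finset.range (2 * m)) _)
    have hsumzero : ∀ i ∈ Finset.range (2 * m),
        volume (Icc (x i) (x (i + 1)) ∩ A) = 0 := by
      intro i hi
      rw [Finset.mem_range] at hi
      have hsub : Icc (x i) (x (i + 1)) ∩ A ⊆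
          (Ioo (x i) (x (i + 1)) ∩ A) ∪ ({x i} ∪ {x (i + 1)}) := by
        rintro s ⟨hs, hsA⟩
        rcases eq_or_lt_of_le hs.1 with h | h
        · exact Or.inr (Or.inl (by simp [← h]))
        rcases eq_or_lt_of_le hs.2 with h' | h'
        · exact Or.inr (Or.inr (by simp [h']))
        · exact Or.inl ⟨⟨h, h'⟩, hsA⟩
      refine le_antisymm ?_ zero_le
      calc volume (Icc (x i) (x (i + 1)) ∩ A)
          ≤ volume ((Ioo (x i) (x (i + 1)) ∩ A) ∪ ({x i} ∪ {x (i + 1)})) :=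
            measure_mono hsub
        _ ≤ volume (Ioo (x i) (x (i + 1)) ∩ A) + volume ({x i} ∪ {x (i + 1)}) :=
            measure_union_le _ _
        _ ≤ volume (Ioo (x i) (x (i + 1)) ∩ A) + (volume {x i} + volume {x (i + 1)}) :=
            add_le_add_right (measure_union_le _ _) _
        _ = 0 := by
            rw [hzero i hi, measure_singleton, measure_singleton]
            simp
    have hzero2 : volume (Ioo (0:ℝ) L ∩ A) = 0 := by
      refine le_antisymm (le_trans hle ?_) zero_le
      rw [Finset.sum_eq_zero hsumzero]
    rw [hzero2] at hprec₂
    exact lt_irrefl 0 hprec₂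
  obtain ⟨i0, hi0, hi0pos⟩ := hstrictgap
  have hsum : ∑ i ∈ Finset.range (2 * m), (x (i + 1) - x i) = L := by
    rw [Finset.sum_range_sub (fun i => x i), hxL, hx0, sub_zero]
  have hlt : L < 2 * (m : ℝ) * (π / (2 * r)) := by
    calc L = ∑ i ∈ Finset.range (2 * m), (x (i + 1) - x i) := hsum.symm
    _ < ∑ _i ∈ Finset.range (2 * m), (π / (2 * r)) := by
        refine Finset.sum_lt_sum (fun i hi => (hgap i (Finset.mem_range.mp hi)).1)
          ⟨i0, Finset.mem_range.mpr hi0, (hgap i0 hi0).2 hi0pos⟩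
    _ = 2 * (m : ℝ) * (π / (2 * r)) := by
        rw [Finset.sum_const, Finset.card_range, nsmul_eq_mul]
        push_cast
        ring
  rw [hq] at hlt
  have hkey : 2 * (m : ℝ) * (L / (2 * n)) = (m : ℝ) * L / n := by
    field_simp
  rw [hkey] at hlt
  rw [lt_div_iff₀ hnpos] at hlt
  have hnm : (n : ℝ) < m := by nlinarith [hL]
  have : n < m := by exact_mod_cast hnm
  omega
end

section
/- Let a ∈ Λₙ and u a nontrivial solution of u'' + au = 0, u'(0) = u'(L) = 0, with zeros of u' given by 0 = x₀ < x₂ < … < x_{2m} = L and zeros of u given by x₁ < x₃ < … < x_{2m-1}. Then ‖a - λₙ‖_{L¹(0,L)} ≥ (nπ/L) · Σ_{i=0}^{2m-1} cot((nπ/L)(x_{i+1} - x_i)). -/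
open MeasureTheory Real Set intervalIntegral Topology Filter


lemma swap_primitive {g h : ℝ → ℝ} {α β : ℝ} (hab : α ≤ β)
    (hg : IntegrableOn g (Ioc α β)) (hh : Continuous h) :
    ∫ t in α..β, (∫ s in α..t, g s) * h t = ∫ s in α..β, g s * (∫ t in s..β, h t) := by
  set μ := volume.restrict (Ioc α β) with hμ
  set F : ℝ × ℝ → ℝ := ({q : ℝ × ℝ | q.1 < q.2}).indicator (fun q => g q.1 * h q.2) with hF
  have hgint : Integrable g μ := hg
  have hhint : Integrable h μ := (hh.integrableOn_Ioc)
  have hFint : Integrable F (μ.prod μ) :=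
    (hgint.mul_prod hhint).indicator (measurableSet_lt measurable_fst measurable_snd)
  have hswap := MeasureTheory.integral_integral_swap (f := fun s t => F (s, t))
      (μ := μ) (ν := μ) (by exact hFint)
  have hL : ∀ t ∈ Ioc α β, (∫ s, F (s, t) ∂μ) = (∫ s in α..t, g s) * h t := by
    intro t ht
    have h1 : (fun s => F (s, t)) = (Iio t).indicator (fun s => g s * h t) := by
      funext s
      simp [hF, Set.indicator_apply, Set.mem_setOf_eq, Set.mem_Iio]
    rw [h1, MeasureTheory.integral_indicator measurableSet_Iio, hμ,
      Measure.restrict_restrict measurableSet_Iio]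
    have h2 : Iio t ∩ Ioc α β = Ioo α t := by
      ext s; simp only [mem_inter_iff, mem_Iio, mem_Ioc, mem_Ioo]
      constructor
      · rintro ⟨h1', h2', _⟩; exact ⟨h2', h1'⟩
      · rintro ⟨h1', h2'⟩; exact ⟨h2', h1', h2'.le.trans ht.2⟩
    rw [h2, MeasureTheory.integral_mul_const]
    congr 1
    rw [intervalIntegral.integral_of_le ht.1.le]
    exact setIntegral_congr_set Ioo_ae_eq_Ioc
  have hR : ∀ s ∈ Ioc α β, (∫ t, F (s, t) ∂μ) = g s * (∫ t in s..β, h t) := by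
    intro s hs
    have h1 : (fun t => F (s, t)) = (Ioi s).indicator (fun t => g s * h t) := by
      funext t
      simp [hF, Set.indicator_apply, Set.mem_setOf_eq, Set.mem_Ioi]
    rw [h1, MeasureTheory.integral_indicator measurableSet_Ioi, hμ,
      Measure.restrict_restrict measurableSet_Ioi]
    have h2 : Ioi s ∩ Ioc α β = Ioc s β := by
      ext t; simp only [mem_inter_iff, mem_Ioi, mem_Ioc]
      constructor
      · rintro ⟨h1', _, h3'⟩; exact ⟨h1', h3'⟩
      · rintro ⟨h1', h2'⟩; exact ⟨h1', hs.1.trans h1', h2'⟩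
    rw [h2, MeasureTheory.integral_const_mul]
    congr 1
    rw [intervalIntegral.integral_of_le hs.2]
  calc ∫ t in α..β, (∫ s in α..t, g s) * h t
      = ∫ t, (∫ s in α..t, g s) * h t ∂μ := by rw [intervalIntegral.integral_of_le hab]
    _ = ∫ t, (∫ s, F (s, t) ∂μ) ∂μ := by
        refine setIntegral_congr_fun measurableSet_Ioc (fun t ht => (hL t ht).symm)
    _ = ∫ s, (∫ t, F (s, t) ∂μ) ∂μ := hswap.symm
    _ = ∫ s, g s * (∫ t in s..β, h t) ∂μ := by
        refine setIntegral_congr_fun measurableSet_Ioc (fun s hs => hR s hs)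
    _ = ∫ s in α..β, g s * (∫ t in s..β, h t) := by rw [intervalIntegral.integral_of_le hab]

lemma parts_of_rep {g G φ φ' : ℝ → ℝ} {α β : ℝ} (hab : α ≤ β)
    (hg : IntegrableOn g (Ioc α β))
    (hG : ∀ t ∈ Icc α β, G t = G α + ∫ s in α..t, g s)
    (hφ : ∀ t, HasDerivAt φ (φ' t) t) (hφ' : Continuous φ') :
    G β * φ β - G α * φ α = (∫ t in α..β, g t * φ t) + ∫ t in α..β, G t * φ' t := by
  have hφc : Continuous φ := by
    rw [continuous_iff_continuousAt]; exact fun t => (hφ t).continuousAt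
  have hgi : IntervalIntegrable g volume α β := by
    rw [intervalIntegrable_iff_integrableOn_Ioc_of_le hab]; exact hg
  have hφ'i : IntervalIntegrable φ' volume α β := hφ'.intervalIntegrable α β
  have hPcont : ContinuousOn (fun t => ∫ s in α..t, g s) (Icc α β) := by
    have := intervalIntegral.continuousOn_primitive_interval
      (a := α) (b := β) (μ := volume) (f := g) ?hint
    · rwa [uIcc_of_le hab] at this
    · rw [uIcc_of_le hab, integrableOn_Icc_iff_integrableOn_Ioc]; exact hg
  have hPφ'i : IntervalIntegrable (fun t => (∫ s in α..t, g s) * φ' t) volume α β := by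
    apply ContinuousOn.intervalIntegrable
    rw [uIcc_of_le hab]
    exact hPcont.mul (hφ'.continuousOn)
  have hint1 : ∫ t in α..β, G t * φ' t
      = G α * (φ β - φ α) + ∫ t in α..β, (∫ s in α..t, g s) * φ' t := by
    have heq : EqOn (fun t => G t * φ' t)
        (fun t => G α * φ' t + (∫ s in α..t, g s) * φ' t) (uIcc α β) := by
      intro t ht
      rw [uIcc_of_le hab] at ht
      simp only
      rw [hG t ht]; ring
    rw [intervalIntegral.integral_congr heq,
      intervalIntegral.integral_add (hφ'i.const_mul _) hPφ'i,
      intervalIntegral.integral_const_mul,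
      intervalIntegral.integral_eq_sub_of_hasDerivAt (fun t _ => hφ t) hφ'i]
  have hint2 : ∫ t in α..β, (∫ s in α..t, g s) * φ' t
      = (∫ s in α..β, g s) * φ β - ∫ s in α..β, g s * φ s := by
    rw [swap_primitive hab hg hφ']
    have heq : EqOn (fun s => g s * (∫ t in s..β, φ' t))
        (fun s => g s * φ β - g s * φ s) (uIcc α β) := by
      intro s hs
      simp only
      rw [intervalIntegral.integral_eq_sub_of_hasDerivAt (fun t _ => hφ t)
        (hφ'.intervalIntegrable s β)]
      ring
    rw [intervalIntegral.integral_congr heq,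
      intervalIntegral.integral_sub (hgi.mul_const _) (hgi.mul_continuousOn hφc.continuousOn),
      intervalIntegral.integral_mul_const]
  have hGβ : G β = G α + ∫ s in α..β, g s := hG β ⟨hab, le_rfl⟩
  rw [hint1, hint2, hGβ]; ring

lemma coreA {a u v : ℝ → ℝ} {ρ α β : ℝ} (hρ : 0 < ρ) (hab : α < β)
    (hcu : ContinuousOn u (Icc α β)) (hcv : ContinuousOn v (Icc α β))
    (hrepu : ∀ t ∈ Icc α β, u t = u α + ∫ r in α..t, v r)
    (hrepv : ∀ t ∈ Icc α β, v t = v α - ∫ r in α..t, a r * u r)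
    (hai : IntegrableOn a (Ioc α β))
    (haui : IntegrableOn (fun s => a s * u s) (Ioc α β))
    (hae : ∀ᵐ s ∂(volume.restrict (Ioc α β)), ρ ^ 2 ≤ a s)
    (hvα : v α = 0) (huβ : u β = 0) (hupos : ∀ t ∈ Ico α β, 0 < u t) :
    ρ * (β - α) ≤ π / 2 ∧ ρ * Real.cot (ρ * (β - α)) ≤ ∫ t in α..β, (a t - ρ ^ 2) := by
  have hαβ : α ≤ β := hab.le
  have hαm : α ∈ Icc α β := ⟨le_rfl, hαβ⟩
  have hβm : β ∈ Icc α β := ⟨hαβ, le_rfl⟩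
  have hM : 0 < u α := hupos α ⟨le_rfl, hab⟩
  have hu0 : ∀ t ∈ Icc α β, 0 ≤ u t := by
    intro t ht
    rcases eq_or_lt_of_le ht.2 with h | h
    · rw [h, huβ]
    · exact (hupos t ⟨ht.1, h⟩).le
  have hcd : ∀ t : ℝ, HasDerivAt (fun s => Real.cos (ρ * (s - α)))
      (-ρ * Real.sin (ρ * (t - α))) t := by
    intro t
    have h1 : HasDerivAt (fun s : ℝ => ρ * (s - α)) ρ t := by
      simpa using ((hasDerivAt_id t).sub_const α).const_mul ρ
    have := (Real.hasDerivAt_cos (ρ * (t - α))).comp t h1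
    exact this.congr_deriv (by ring)
  have hsd : ∀ t : ℝ, HasDerivAt (fun s => Real.sin (ρ * (s - α)))
      (ρ * Real.cos (ρ * (t - α))) t := by
    intro t
    have h1 : HasDerivAt (fun s : ℝ => ρ * (s - α)) ρ t := by
      simpa using ((hasDerivAt_id t).sub_const α).const_mul ρ
    have := (Real.hasDerivAt_sin (ρ * (t - α))).comp t h1
    exact this.congr_deriv (by ring)
  have hlin : Continuous (fun s : ℝ => ρ * (s - α)) :=
    continuous_const.mul (continuous_id.sub continuous_const)
  have hcc : Continuous (fun s => Real.cos (ρ * (s - α))) := Real.continuous_cos.comp hlin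
  have hsc : Continuous (fun s => Real.sin (ρ * (s - α))) := Real.continuous_sin.comp hlin
  have hccn : Continuous (fun s => -ρ * Real.sin (ρ * (s - α))) := continuous_const.mul hsc
  have hscn : Continuous (fun s => ρ * Real.cos (ρ * (s - α))) := continuous_const.mul hcc
  have haeIcc : ∀ t ∈ Icc α β, ∀ᵐ s ∂(volume.restrict (Icc α t)),
      ρ ^ 2 ≤ a s ∧ s ∈ Icc α β := by
    intro t ht
    have h1 : ∀ᵐ s ∂(volume.restrict (Ioc α t)), ρ ^ 2 ≤ a s :=
      ae_restrict_of_ae_restrict_of_subset (Ioc_subset_Ioc le_rfl ht.2) hae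
    have h2 : ∀ᵐ s ∂(volume.restrict (Icc α t)), ρ ^ 2 ≤ a s := by
      rwa [Measure.restrict_congr_set Ioc_ae_eq_Icc] at h1
    filter_upwards [h2, ae_restrict_mem measurableSet_Icc] with s h3 h4
    exact ⟨h3, Icc_subset_Icc le_rfl ht.2 h4⟩
  -- first fundamental identity, valid for all t in [α, β]
  have key : ∀ t ∈ Icc α β,
      v t * Real.cos (ρ * (t - α)) + ρ * (u t * Real.sin (ρ * (t - α)))
        = ∫ s in α..t, (ρ ^ 2 - a s) * (u s * Real.cos (ρ * (s - α))) := by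
    intro t ht
    have hαt : α ≤ t := ht.1
    have hIccsub : Icc α t ⊆ Icc α β := Icc_subset_Icc le_rfl ht.2
    have hIocsub : Ioc α t ⊆ Ioc α β := Ioc_subset_Ioc le_rfl ht.2
    have hgau : IntegrableOn (fun s => -(a s * u s)) (Ioc α t) := (haui.mono_set hIocsub).neg
    have hvint : IntegrableOn v (Ioc α t) :=
      ((hcv.mono hIccsub).integrableOn_Icc).mono_set Ioc_subset_Icc_self
    have hp1 := parts_of_rep (g := fun s => -(a s * u s)) (G := v)
        (φ := fun s => Real.cos (ρ * (s - α))) (φ' := fun s => -ρ * Real.sin (ρ * (s - α)))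
        hαt hgau (fun r hr => by
          rw [intervalIntegral.integral_neg, hrepv r (hIccsub hr)]; ring) hcd hccn
    have hp2 := parts_of_rep (g := v) (G := u)
        (φ := fun s => Real.sin (ρ * (s - α))) (φ' := fun s => ρ * Real.cos (ρ * (s - α)))
        hαt hvint (fun r hr => hrepu r (hIccsub hr)) hsd hscn
    have hauI : IntervalIntegrable (fun s => a s * u s) volume α t :=
      (intervalIntegrable_iff_integrableOn_Ioc_of_le hαt).2 (haui.mono_set hIocsub)
    have hI1 : IntervalIntegrable (fun s => -(a s * u s) * Real.cos (ρ * (s - α))) volume α t :=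
      hauI.neg.mul_continuousOn hcc.continuousOn
    have hI2 : IntervalIntegrable (fun s => v s * (-ρ * Real.sin (ρ * (s - α)))) volume α t := by
      apply ContinuousOn.intervalIntegrable
      exact (hcv.mono (by rw [uIcc_of_le hαt]; exact hIccsub)).mul hccn.continuousOn
    have hI3 : IntervalIntegrable (fun s => v s * Real.sin (ρ * (s - α))) volume α t := by
      apply ContinuousOn.intervalIntegrable
      exact (hcv.mono (by rw [uIcc_of_le hαt]; exact hIccsub)).mul hsc.continuousOn
    have hI4 : IntervalIntegrable (fun s => u s * (ρ * Real.cos (ρ * (s - α)))) volume α t := by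
      apply ContinuousOn.intervalIntegrable
      exact (hcu.mono (by rw [uIcc_of_le hαt]; exact hIccsub)).mul hscn.continuousOn
    have split : (∫ s in α..t, (ρ ^ 2 - a s) * (u s * Real.cos (ρ * (s - α))))
        = ((∫ s in α..t, -(a s * u s) * Real.cos (ρ * (s - α)))
            + ∫ s in α..t, v s * (-ρ * Real.sin (ρ * (s - α))))
          + ρ * ((∫ s in α..t, v s * Real.sin (ρ * (s - α)))
            + ∫ s in α..t, u s * (ρ * Real.cos (ρ * (s - α)))) := by
      rw [← intervalIntegral.integral_add hI1 hI2, ← intervalIntegral.integral_add hI3 hI4,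
        ← intervalIntegral.integral_const_mul,
        ← intervalIntegral.integral_add (hI1.add hI2) ((hI3.add hI4).const_mul ρ)]
      apply intervalIntegral.integral_congr
      intro s _
      simp only [Pi.add_apply]
      ring
    have e0 : v t * Real.cos (ρ * (t - α)) + ρ * (u t * Real.sin (ρ * (t - α)))
        = (v t * Real.cos (ρ * (t - α)) - v α * Real.cos (ρ * (α - α)))
          + ρ * (u t * Real.sin (ρ * (t - α)) - u α * Real.sin (ρ * (α - α))) := by
      simp [hvα]
    rw [e0, hp1, hp2, split]
  -- second fundamental identity, at β
  have key2 : v β * Real.sin (ρ * (β - α)) + ρ * u α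
      = ∫ s in α..β, (ρ ^ 2 - a s) * (u s * Real.sin (ρ * (s - α))) := by
    have hvint : IntegrableOn v (Ioc α β) :=
      (hcv.integrableOn_Icc).mono_set Ioc_subset_Icc_self
    have hp1 := parts_of_rep (g := fun s => -(a s * u s)) (G := v)
        (φ := fun s => Real.sin (ρ * (s - α))) (φ' := fun s => ρ * Real.cos (ρ * (s - α)))
        hαβ haui.neg (fun r hr => by
          rw [intervalIntegral.integral_neg, hrepv r hr]; ring) hsd hscn
    have hp2 := parts_of_rep (g := v) (G := u)
        (φ := fun s => Real.cos (ρ * (s - α))) (φ' := fun s => -ρ * Real.sin (ρ * (s - α)))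
        hαβ hvint (fun r hr => hrepu r hr) hcd hccn
    have hauI : IntervalIntegrable (fun s => a s * u s) volume α β :=
      (intervalIntegrable_iff_integrableOn_Ioc_of_le hαβ).2 haui
    have hI1 : IntervalIntegrable (fun s => -(a s * u s) * Real.sin (ρ * (s - α))) volume α β :=
      hauI.neg.mul_continuousOn hsc.continuousOn
    have hI2 : IntervalIntegrable (fun s => v s * (ρ * Real.cos (ρ * (s - α)))) volume α β := by
      apply ContinuousOn.intervalIntegrable
      exact (hcv.mono (by rw [uIcc_of_le hαβ])).mul hscn.continuousOn
    have hI3 : IntervalIntegrable (fun s => v s * Real.cos (ρ * (s - α))) volume α β := by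
      apply ContinuousOn.intervalIntegrable
      exact (hcv.mono (by rw [uIcc_of_le hαβ])).mul hcc.continuousOn
    have hI4 : IntervalIntegrable (fun s => u s * (-ρ * Real.sin (ρ * (s - α)))) volume α β := by
      apply ContinuousOn.intervalIntegrable
      exact (hcu.mono (by rw [uIcc_of_le hαβ])).mul hccn.continuousOn
    have split : (∫ s in α..β, (ρ ^ 2 - a s) * (u s * Real.sin (ρ * (s - α))))
        = ((∫ s in α..β, -(a s * u s) * Real.sin (ρ * (s - α)))
            + ∫ s in α..β, v s * (ρ * Real.cos (ρ * (s - α))))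
          - ρ * ((∫ s in α..β, v s * Real.cos (ρ * (s - α)))
            + ∫ s in α..β, u s * (-ρ * Real.sin (ρ * (s - α)))) := by
      rw [← intervalIntegral.integral_add hI1 hI2, ← intervalIntegral.integral_add hI3 hI4,
        ← intervalIntegral.integral_const_mul,
        ← intervalIntegral.integral_sub (hI1.add hI2) ((hI3.add hI4).const_mul ρ)]
      apply intervalIntegral.integral_congr
      intro s _
      simp only [Pi.add_apply, Pi.sub_apply]
      ring
    have e0 : v β * Real.sin (ρ * (β - α)) + ρ * u α
        = (v β * Real.sin (ρ * (β - α)) - v α * Real.sin (ρ * (α - α)))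
          - ρ * (u β * Real.cos (ρ * (β - α)) - u α * Real.cos (ρ * (α - α))) := by
      simp [hvα, huβ]
    rw [e0, hp1, hp2, split]
  -- nonnegativity helper
  have hnonneg : ∀ t ∈ Icc α β, ∀ w : ℝ → ℝ, (∀ s ∈ Icc α β, 0 ≤ w s) →
      ContinuousOn w (Icc α β) →
      0 ≤ ∫ s in α..t, (a s - ρ ^ 2) * (u s * w s) := by
    intro t ht w hw hwc
    apply intervalIntegral.integral_nonneg_of_ae_restrict ht.1
    filter_upwards [haeIcc t ht] with s hs
    exact mul_nonneg (by linarith [hs.1]) (mul_nonneg (hu0 s hs.2) (hw s hs.2))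
  have hflip : ∀ t ∈ Icc α β, ∀ w : ℝ → ℝ,
      (∫ s in α..t, (ρ ^ 2 - a s) * (u s * w s))
        = -∫ s in α..t, (a s - ρ ^ 2) * (u s * w s) := by
    intro t ht w
    rw [← intervalIntegral.integral_neg]
    apply intervalIntegral.integral_congr
    intro s _
    ring
  -- Claim 1 : ρ (β - α) ≤ π/2
  have hhalf : ρ * (β - α) ≤ π / 2 := by
    by_contra hc
    push_neg at hc
    have hρ2 : 0 < π / (2 * ρ) := by positivity
    have ht'β : α + π / (2 * ρ) < β := by
      have h3 : π / (2 * ρ) < β - α := by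
        rw [div_lt_iff₀ (by positivity)]
        calc π = (π / 2) * 2 := by ring
          _ < (ρ * (β - α)) * 2 := by linarith
          _ = (β - α) * (2 * ρ) := by ring
      linarith
    have ht'm : α + π / (2 * ρ) ∈ Icc α β := ⟨by linarith, ht'β.le⟩
    have harg : ρ * (α + π / (2 * ρ) - α) = π / 2 := by
      field_simp
      ring
    have hk := key _ ht'm
    rw [harg, Real.cos_pi_div_two, Real.sin_pi_div_two] at hk
    have hwc : ∀ s ∈ Icc α (α + π / (2 * ρ)), 0 ≤ Real.cos (ρ * (s - α)) := by
      intro s hs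
      apply Real.cos_nonneg_of_mem_Icc
      constructor
      · have := mul_nonneg hρ.le (sub_nonneg.2 hs.1)
        linarith [pi_pos]
      · have h4 : ρ * (s - α) ≤ ρ * (α + π / (2 * ρ) - α) :=
          mul_le_mul_of_nonneg_left (by linarith [hs.2]) hρ.le
        rw [harg] at h4
        exact h4
    have hpos : 0 < v (α + π / (2 * ρ)) * 0 + ρ * (u (α + π / (2 * ρ)) * 1) := by
      have := hupos _ ⟨ht'm.1, ht'β⟩
      nlinarith
    have hn : 0 ≤ ∫ s in α..(α + π / (2 * ρ)),
        (a s - ρ ^ 2) * (u s * Real.cos (ρ * (s - α))) := by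
      apply intervalIntegral.integral_nonneg_of_ae_restrict ht'm.1
      filter_upwards [haeIcc _ ht'm, ae_restrict_mem measurableSet_Icc] with s hs hsm
      exact mul_nonneg (by linarith [hs.1]) (mul_nonneg (hu0 s hs.2) (hwc s hsm))
    rw [hflip _ ht'm _] at hk
    linarith
  -- angle facts
  have hargmem : ∀ s ∈ Icc α β, ρ * (s - α) ∈ Icc 0 (π / 2) := by
    intro s hs
    constructor
    · exact mul_nonneg hρ.le (sub_nonneg.2 hs.1)
    · have h4 : ρ * (s - α) ≤ ρ * (β - α) :=
        mul_le_mul_of_nonneg_left (by linarith [hs.2]) hρ.le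
      linarith
  have hφ0 : ∀ s ∈ Icc α β, 0 ≤ Real.cos (ρ * (s - α)) := by
    intro s hs
    apply Real.cos_nonneg_of_mem_Icc
    have := hargmem s hs
    constructor
    · linarith [this.1, pi_pos]
    · exact this.2
  have hψ0 : ∀ s ∈ Icc α β, 0 ≤ Real.sin (ρ * (s - α)) := by
    intro s hs
    apply Real.sin_nonneg_of_nonneg_of_le_pi (hargmem s hs).1
    linarith [(hargmem s hs).2, pi_pos]
  have hsinpos : 0 < Real.sin (ρ * (β - α)) := by
    apply Real.sin_pos_of_pos_of_lt_pi
    · exact mul_pos hρ (sub_pos.2 hab)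
    · linarith [pi_pos]
  -- v ≤ 0 and u ≤ u α on [α, β]
  have hvneg : ∀ t ∈ Icc α β, v t ≤ 0 := by
    intro t ht
    rw [hrepv t ht, hvα, zero_sub, neg_nonpos]
    apply intervalIntegral.integral_nonneg_of_ae_restrict ht.1
    filter_upwards [haeIcc t ht] with s hs
    exact mul_nonneg (le_trans (by positivity) hs.1) (hu0 s hs.2)
  have huM : ∀ t ∈ Icc α β, u t ≤ u α := by
    intro t ht
    rw [hrepu t ht]
    have : (∫ r in α..t, v r) ≤ 0 := by
      have h1 : 0 ≤ ∫ r in α..t, -v r := by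
        apply intervalIntegral.integral_nonneg_of_ae_restrict ht.1
        filter_upwards [ae_restrict_mem measurableSet_Icc] with s hs
        exact neg_nonneg.2 (hvneg s (Icc_subset_Icc le_rfl ht.2 hs))
      rw [intervalIntegral.integral_neg] at h1
      linarith
    linarith
  refine ⟨hhalf, ?_⟩
  -- main estimate
  have hIab : IntervalIntegrable (fun s => a s - ρ ^ 2) volume α β :=
    ((intervalIntegrable_iff_integrableOn_Ioc_of_le hαβ).2 hai).sub
      (intervalIntegrable_const)
  have hkey2 : v β * Real.sin (ρ * (β - α)) + ρ * u α ≤ 0 := by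
    rw [key2, hflip β hβm _]
    have := hnonneg β hβm (fun s => Real.sin (ρ * (s - α))) hψ0 hsc.continuousOn
    linarith
  have hkeyβ := key β hβm
  rw [huβ, hflip β hβm _] at hkeyβ
  -- bound ∫ (a-ρ²) u φ ≤ (∫ (a - ρ²)) * u α
  have hbound : (∫ s in α..β, (a s - ρ ^ 2) * (u s * Real.cos (ρ * (s - α))))
      ≤ (∫ s in α..β, (a s - ρ ^ 2)) * u α := by
    rw [← intervalIntegral.integral_mul_const]
    apply intervalIntegral.integral_mono_ae_restrict hαβ
    · exact hIab.mul_continuousOn (by rw [uIcc_of_le hαβ]; exact hcu.mul hcc.continuousOn)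
    · exact hIab.mul_const _
    · filter_upwards [haeIcc β hβm] with s hs
      have h1 : 0 ≤ a s - ρ ^ 2 := by linarith [hs.1]
      have h2 : u s * Real.cos (ρ * (s - α)) ≤ u α := by
        calc u s * Real.cos (ρ * (s - α)) ≤ u s * 1 := by
              apply mul_le_mul_of_nonneg_left (Real.cos_le_one _) (hu0 s hs.2)
          _ = u s := mul_one _
          _ ≤ u α := huM s hs.2
      exact mul_le_mul_of_nonneg_left h2 h1
  -- conclude
  have hvβcos : -(v β) * Real.cos (ρ * (β - α)) ≤ (∫ s in α..β, (a s - ρ ^ 2)) * u α := by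
    have : v β * Real.cos (ρ * (β - α)) + ρ * (0 * Real.sin (ρ * (β - α)))
        = -∫ s in α..β, (a s - ρ ^ 2) * (u s * Real.cos (ρ * (s - α))) := hkeyβ
    nlinarith [hbound]
  have hlow : ρ * u α * (Real.cos (ρ * (β - α)) / Real.sin (ρ * (β - α)))
      ≤ -(v β) * Real.cos (ρ * (β - α)) := by
    have h1 : ρ * u α / Real.sin (ρ * (β - α)) ≤ -(v β) := by
      rw [div_le_iff₀ hsinpos]
      nlinarith [hkey2]
    have h2 := mul_le_mul_of_nonneg_right h1 (hφ0 β hβm)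
    calc ρ * u α * (Real.cos (ρ * (β - α)) / Real.sin (ρ * (β - α)))
        = (ρ * u α / Real.sin (ρ * (β - α))) * Real.cos (ρ * (β - α)) := by ring
      _ ≤ -(v β) * Real.cos (ρ * (β - α)) := h2
  rw [Real.cot_eq_cos_div_sin]
  have hfin : u α * (ρ * (Real.cos (ρ * (β - α)) / Real.sin (ρ * (β - α))))
      ≤ u α * (∫ s in α..β, (a s - ρ ^ 2)) := by
    nlinarith [hlow, hvβcos]
  exact le_of_mul_le_mul_left (by linarith [hfin]) hM

lemma coreB {a u v : ℝ → ℝ} {ρ α β : ℝ} (hρ : 0 < ρ) (hab : α < β)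
    (hcu : ContinuousOn u (Icc α β)) (hcv : ContinuousOn v (Icc α β))
    (hrepu : ∀ s ∈ Icc α β, ∀ t ∈ Icc α β, u t = u s + ∫ r in s..t, v r)
    (hrepv : ∀ s ∈ Icc α β, ∀ t ∈ Icc α β, v t = v s - ∫ r in s..t, a r * u r)
    (hai : IntegrableOn a (Ioc α β))
    (haui : IntegrableOn (fun s => a s * u s) (Ioc α β))
    (hae : ∀ᵐ s ∂(volume.restrict (Ioc α β)), ρ ^ 2 ≤ a s)
    (huα : u α = 0) (hvβ : v β = 0) (hupos : ∀ t ∈ Ioc α β, 0 < u t) :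
    ρ * (β - α) ≤ π / 2 ∧ ρ * Real.cot (ρ * (β - α)) ≤ ∫ t in α..β, (a t - ρ ^ 2) := by
  have hαβ : α ≤ β := hab.le
  have hαm : α ∈ Icc α β := ⟨le_rfl, hαβ⟩
  have hβm : β ∈ Icc α β := ⟨hαβ, le_rfl⟩
  have hM : 0 < u β := hupos β ⟨hab, le_rfl⟩
  have hu0 : ∀ t ∈ Icc α β, 0 ≤ u t := by
    intro t ht
    rcases eq_or_lt_of_le ht.1 with h | h
    · rw [← h, huα]
    · exact (hupos t ⟨h, ht.2⟩).le
  have hcd : ∀ t : ℝ, HasDerivAt (fun s => Real.cos (ρ * (β - s)))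
      (ρ * Real.sin (ρ * (β - t))) t := by
    intro t
    have h1 : HasDerivAt (fun s : ℝ => ρ * (β - s)) (-ρ) t := by
      simpa using ((hasDerivAt_id t).const_sub β).const_mul ρ
    have := (Real.hasDerivAt_cos (ρ * (β - t))).comp t h1
    exact this.congr_deriv (by ring)
  have hsd : ∀ t : ℝ, HasDerivAt (fun s => Real.sin (ρ * (β - s)))
      (-ρ * Real.cos (ρ * (β - t))) t := by
    intro t
    have h1 : HasDerivAt (fun s : ℝ => ρ * (β - s)) (-ρ) t := by
      simpa using ((hasDerivAt_id t).const_sub β).const_mul ρ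
    have := (Real.hasDerivAt_sin (ρ * (β - t))).comp t h1
    exact this.congr_deriv (by ring)
  have hlin : Continuous (fun s : ℝ => ρ * (β - s)) :=
    continuous_const.mul (continuous_const.sub continuous_id)
  have hcc : Continuous (fun s => Real.cos (ρ * (β - s))) := Real.continuous_cos.comp hlin
  have hsc : Continuous (fun s => Real.sin (ρ * (β - s))) := Real.continuous_sin.comp hlin
  have hccn : Continuous (fun s => ρ * Real.sin (ρ * (β - s))) := continuous_const.mul hsc
  have hscn : Continuous (fun s => -ρ * Real.cos (ρ * (β - s))) := continuous_const.mul hcc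
  have haeIcc : ∀ t ∈ Icc α β, ∀ᵐ s ∂(volume.restrict (Icc t β)),
      ρ ^ 2 ≤ a s ∧ s ∈ Icc α β := by
    intro t ht
    have h1 : ∀ᵐ s ∂(volume.restrict (Ioc t β)), ρ ^ 2 ≤ a s :=
      ae_restrict_of_ae_restrict_of_subset (Ioc_subset_Ioc ht.1 le_rfl) hae
    have h2 : ∀ᵐ s ∂(volume.restrict (Icc t β)), ρ ^ 2 ≤ a s := by
      rwa [Measure.restrict_congr_set Ioc_ae_eq_Icc] at h1
    filter_upwards [h2, ae_restrict_mem measurableSet_Icc] with s h3 h4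
    exact ⟨h3, Icc_subset_Icc ht.1 le_rfl h4⟩
  -- first fundamental identity, valid for all t in [α, β]
  have key : ∀ t ∈ Icc α β,
      v t * Real.cos (ρ * (β - t)) - ρ * (u t * Real.sin (ρ * (β - t)))
        = ∫ s in t..β, (a s - ρ ^ 2) * (u s * Real.cos (ρ * (β - s))) := by
    intro t ht
    have htβ : t ≤ β := ht.2
    have hIccsub : Icc t β ⊆ Icc α β := Icc_subset_Icc ht.1 le_rfl
    have hIocsub : Ioc t β ⊆ Ioc α β := Ioc_subset_Ioc ht.1 le_rfl
    have hgau : IntegrableOn (fun s => -(a s * u s)) (Ioc t β) := (haui.mono_set hIocsub).neg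
    have hvint : IntegrableOn v (Ioc t β) :=
      ((hcv.mono hIccsub).integrableOn_Icc).mono_set Ioc_subset_Icc_self
    have hp1 := parts_of_rep (g := fun s => -(a s * u s)) (G := v)
        (φ := fun s => Real.cos (ρ * (β - s))) (φ' := fun s => ρ * Real.sin (ρ * (β - s)))
        htβ hgau (fun r hr => by
          rw [intervalIntegral.integral_neg, hrepv t (hIccsub ⟨le_rfl, htβ⟩) r (hIccsub hr)]
          ring) hcd hccn
    have hp2 := parts_of_rep (g := v) (G := u)
        (φ := fun s => Real.sin (ρ * (β - s))) (φ' := fun s => -ρ * Real.cos (ρ * (β - s)))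
        htβ hvint (fun r hr => hrepu t (hIccsub ⟨le_rfl, htβ⟩) r (hIccsub hr)) hsd hscn
    have hauI : IntervalIntegrable (fun s => a s * u s) volume t β :=
      (intervalIntegrable_iff_integrableOn_Ioc_of_le htβ).2 (haui.mono_set hIocsub)
    have hI1 : IntervalIntegrable (fun s => -(a s * u s) * Real.cos (ρ * (β - s))) volume t β :=
      hauI.neg.mul_continuousOn hcc.continuousOn
    have hI2 : IntervalIntegrable (fun s => v s * (ρ * Real.sin (ρ * (β - s)))) volume t β := by
      apply ContinuousOn.intervalIntegrable
      exact (hcv.mono (by rw [uIcc_of_le htβ]; exact hIccsub)).mul hccn.continuousOn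
    have hI3 : IntervalIntegrable (fun s => v s * Real.sin (ρ * (β - s))) volume t β := by
      apply ContinuousOn.intervalIntegrable
      exact (hcv.mono (by rw [uIcc_of_le htβ]; exact hIccsub)).mul hsc.continuousOn
    have hI4 : IntervalIntegrable (fun s => u s * (-ρ * Real.cos (ρ * (β - s)))) volume t β := by
      apply ContinuousOn.intervalIntegrable
      exact (hcu.mono (by rw [uIcc_of_le htβ]; exact hIccsub)).mul hscn.continuousOn
    have split : (∫ s in t..β, (a s - ρ ^ 2) * (u s * Real.cos (ρ * (β - s))))
        = -(((∫ s in t..β, -(a s * u s) * Real.cos (ρ * (β - s)))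
            + ∫ s in t..β, v s * (ρ * Real.sin (ρ * (β - s))))
          - ρ * ((∫ s in t..β, v s * Real.sin (ρ * (β - s)))
            + ∫ s in t..β, u s * (-ρ * Real.cos (ρ * (β - s))))) := by
      rw [← intervalIntegral.integral_add hI1 hI2, ← intervalIntegral.integral_add hI3 hI4,
        ← intervalIntegral.integral_const_mul,
        ← intervalIntegral.integral_sub (hI1.add hI2) ((hI3.add hI4).const_mul ρ),
        ← intervalIntegral.integral_neg]
      apply intervalIntegral.integral_congr
      intro s _
      simp only [Pi.add_apply, Pi.neg_apply, Pi.sub_apply]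
      ring
    have e1 : v β * Real.cos (ρ * (β - β)) - v t * Real.cos (ρ * (β - t))
        = -(v t * Real.cos (ρ * (β - t))) := by
      simp [hvβ]
    have e2 : u β * Real.sin (ρ * (β - β)) - u t * Real.sin (ρ * (β - t))
        = -(u t * Real.sin (ρ * (β - t))) := by
      simp
    rw [split]
    rw [e1] at hp1
    rw [e2] at hp2
    have : v t * Real.cos (ρ * (β - t)) - ρ * (u t * Real.sin (ρ * (β - t)))
        = -((-(v t * Real.cos (ρ * (β - t)))) - ρ * (-(u t * Real.sin (ρ * (β - t))))) := by
      ring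
    rw [this, hp1, hp2]
  -- second fundamental identity
  have key2 : -(v α * Real.sin (ρ * (β - α))) + ρ * u β
      = ∫ s in α..β, (ρ ^ 2 - a s) * (u s * Real.sin (ρ * (β - s))) := by
    have hvint : IntegrableOn v (Ioc α β) :=
      (hcv.integrableOn_Icc).mono_set Ioc_subset_Icc_self
    have hp1 := parts_of_rep (g := fun s => -(a s * u s)) (G := v)
        (φ := fun s => Real.sin (ρ * (β - s))) (φ' := fun s => -ρ * Real.cos (ρ * (β - s)))
        hαβ haui.neg (fun r hr => by
          rw [intervalIntegral.integral_neg, hrepv α hαm r hr]; ring) hsd hscn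
    have hp2 := parts_of_rep (g := v) (G := u)
        (φ := fun s => Real.cos (ρ * (β - s))) (φ' := fun s => ρ * Real.sin (ρ * (β - s)))
        hαβ hvint (fun r hr => hrepu α hαm r hr) hcd hccn
    have hauI : IntervalIntegrable (fun s => a s * u s) volume α β :=
      (intervalIntegrable_iff_integrableOn_Ioc_of_le hαβ).2 haui
    have hI1 : IntervalIntegrable (fun s => -(a s * u s) * Real.sin (ρ * (β - s))) volume α β :=
      hauI.neg.mul_continuousOn hsc.continuousOn
    have hI2 : IntervalIntegrable (fun s => v s * (-ρ * Real.cos (ρ * (β - s)))) volume α β := by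
      apply ContinuousOn.intervalIntegrable
      exact (hcv.mono (by rw [uIcc_of_le hαβ])).mul hscn.continuousOn
    have hI3 : IntervalIntegrable (fun s => v s * Real.cos (ρ * (β - s))) volume α β := by
      apply ContinuousOn.intervalIntegrable
      exact (hcv.mono (by rw [uIcc_of_le hαβ])).mul hcc.continuousOn
    have hI4 : IntervalIntegrable (fun s => u s * (ρ * Real.sin (ρ * (β - s)))) volume α β := by
      apply ContinuousOn.intervalIntegrable
      exact (hcu.mono (by rw [uIcc_of_le hαβ])).mul hccn.continuousOn
    have split : (∫ s in α..β, (ρ ^ 2 - a s) * (u s * Real.sin (ρ * (β - s))))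
        = ((∫ s in α..β, -(a s * u s) * Real.sin (ρ * (β - s)))
            + ∫ s in α..β, v s * (-ρ * Real.cos (ρ * (β - s))))
          + ρ * ((∫ s in α..β, v s * Real.cos (ρ * (β - s)))
            + ∫ s in α..β, u s * (ρ * Real.sin (ρ * (β - s)))) := by
      rw [← intervalIntegral.integral_add hI1 hI2, ← intervalIntegral.integral_add hI3 hI4,
        ← intervalIntegral.integral_const_mul,
        ← intervalIntegral.integral_add (hI1.add hI2) ((hI3.add hI4).const_mul ρ)]
      apply intervalIntegral.integral_congr
      intro s _
      simp only [Pi.add_apply]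
      ring
    have e0 : -(v α * Real.sin (ρ * (β - α))) + ρ * u β
        = (v β * Real.sin (ρ * (β - β)) - v α * Real.sin (ρ * (β - α)))
          + ρ * (u β * Real.cos (ρ * (β - β)) - u α * Real.cos (ρ * (β - α))) := by
      simp [huα]
    rw [e0, hp1, hp2, split]
  -- Claim 1
  have hhalf : ρ * (β - α) ≤ π / 2 := by
    by_contra hc
    push_neg at hc
    have hρ2 : 0 < π / (2 * ρ) := by positivity
    have ht'α : α < β - π / (2 * ρ) := by
      have h3 : π / (2 * ρ) < β - α := by
        rw [div_lt_iff₀ (by positivity)]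
        calc π = (π / 2) * 2 := by ring
          _ < (ρ * (β - α)) * 2 := by linarith
          _ = (β - α) * (2 * ρ) := by ring
      linarith
    have ht'm : β - π / (2 * ρ) ∈ Icc α β := ⟨ht'α.le, by linarith⟩
    have harg : ρ * (β - (β - π / (2 * ρ))) = π / 2 := by
      field_simp
      ring
    have hk := key _ ht'm
    rw [harg, Real.cos_pi_div_two, Real.sin_pi_div_two] at hk
    have hwc : ∀ s ∈ Icc (β - π / (2 * ρ)) β, 0 ≤ Real.cos (ρ * (β - s)) := by
      intro s hs
      apply Real.cos_nonneg_of_mem_Icc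
      constructor
      · have := mul_nonneg hρ.le (sub_nonneg.2 hs.2)
        linarith [pi_pos]
      · have h4 : ρ * (β - s) ≤ ρ * (β - (β - π / (2 * ρ))) :=
          mul_le_mul_of_nonneg_left (by linarith [hs.1]) hρ.le
        rw [harg] at h4
        exact h4
    have hpos : 0 < u (β - π / (2 * ρ)) := hupos _ ⟨ht'α, by linarith⟩
    have hn : 0 ≤ ∫ s in (β - π / (2 * ρ))..β,
        (a s - ρ ^ 2) * (u s * Real.cos (ρ * (β - s))) := by
      apply intervalIntegral.integral_nonneg_of_ae_restrict ht'm.2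
      filter_upwards [haeIcc _ ht'm, ae_restrict_mem measurableSet_Icc] with s hs hsm
      exact mul_nonneg (by linarith [hs.1]) (mul_nonneg (hu0 s hs.2) (hwc s hsm))
    nlinarith [hk, hn, hpos]
  -- angle facts
  have hargmem : ∀ s ∈ Icc α β, ρ * (β - s) ∈ Icc 0 (π / 2) := by
    intro s hs
    constructor
    · exact mul_nonneg hρ.le (sub_nonneg.2 hs.2)
    · have h4 : ρ * (β - s) ≤ ρ * (β - α) :=
        mul_le_mul_of_nonneg_left (by linarith [hs.1]) hρ.le
      linarith
  have hφ0 : ∀ s ∈ Icc α β, 0 ≤ Real.cos (ρ * (β - s)) := by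
    intro s hs
    apply Real.cos_nonneg_of_mem_Icc
    have := hargmem s hs
    constructor
    · linarith [this.1, pi_pos]
    · exact this.2
  have hψ0 : ∀ s ∈ Icc α β, 0 ≤ Real.sin (ρ * (β - s)) := by
    intro s hs
    apply Real.sin_nonneg_of_nonneg_of_le_pi (hargmem s hs).1
    linarith [(hargmem s hs).2, pi_pos]
  have hsinpos : 0 < Real.sin (ρ * (β - α)) := by
    apply Real.sin_pos_of_pos_of_lt_pi
    · exact mul_pos hρ (sub_pos.2 hab)
    · linarith [pi_pos]
  -- v ≥ 0 and u ≤ u β on [α, β]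
  have hvpos : ∀ t ∈ Icc α β, 0 ≤ v t := by
    intro t ht
    have h1 := hrepv t ht β hβm
    rw [hvβ] at h1
    have h2 : 0 ≤ ∫ r in t..β, a r * u r := by
      apply intervalIntegral.integral_nonneg_of_ae_restrict ht.2
      filter_upwards [haeIcc t ht] with s hs
      exact mul_nonneg (le_trans (by positivity) hs.1) (hu0 s hs.2)
    linarith
  have huM : ∀ t ∈ Icc α β, u t ≤ u β := by
    intro t ht
    have h1 := hrepu t ht β hβm
    have h2 : 0 ≤ ∫ r in t..β, v r := by
      apply intervalIntegral.integral_nonneg_of_ae_restrict ht.2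
      filter_upwards [ae_restrict_mem measurableSet_Icc] with s hs
      exact hvpos s (Icc_subset_Icc ht.1 le_rfl hs)
    linarith
  refine ⟨hhalf, ?_⟩
  have hIab : IntervalIntegrable (fun s => a s - ρ ^ 2) volume α β :=
    ((intervalIntegrable_iff_integrableOn_Ioc_of_le hαβ).2 hai).sub intervalIntegrable_const
  have hkey2 : ρ * u β ≤ v α * Real.sin (ρ * (β - α)) := by
    have h1 : (∫ s in α..β, (ρ ^ 2 - a s) * (u s * Real.sin (ρ * (β - s)))) ≤ 0 := by
      have h2 : 0 ≤ ∫ s in α..β, (a s - ρ ^ 2) * (u s * Real.sin (ρ * (β - s))) := by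
        apply intervalIntegral.integral_nonneg_of_ae_restrict hαβ
        filter_upwards [haeIcc α hαm] with s hs
        exact mul_nonneg (by linarith [hs.1]) (mul_nonneg (hu0 s hs.2) (hψ0 s hs.2))
      have h3 : (∫ s in α..β, (ρ ^ 2 - a s) * (u s * Real.sin (ρ * (β - s))))
          = -∫ s in α..β, (a s - ρ ^ 2) * (u s * Real.sin (ρ * (β - s))) := by
        rw [← intervalIntegral.integral_neg]
        apply intervalIntegral.integral_congr
        intro s _
        ring
      linarith
    have := key2
    linarith [key2, h1]
  have hkeyα := key α hαm
  have hbound : (∫ s in α..β, (a s - ρ ^ 2) * (u s * Real.cos (ρ * (β - s))))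
      ≤ (∫ s in α..β, (a s - ρ ^ 2)) * u β := by
    rw [← intervalIntegral.integral_mul_const]
    apply intervalIntegral.integral_mono_ae_restrict hαβ
    · exact hIab.mul_continuousOn (by rw [uIcc_of_le hαβ]; exact hcu.mul hcc.continuousOn)
    · exact hIab.mul_const _
    · filter_upwards [haeIcc α hαm] with s hs
      have h1 : 0 ≤ a s - ρ ^ 2 := by linarith [hs.1]
      have h2 : u s * Real.cos (ρ * (β - s)) ≤ u β := by
        calc u s * Real.cos (ρ * (β - s)) ≤ u s * 1 := by
              apply mul_le_mul_of_nonneg_left (Real.cos_le_one _) (hu0 s hs.2)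
          _ = u s := mul_one _
          _ ≤ u β := huM s hs.2
      exact mul_le_mul_of_nonneg_left h2 h1
  have hvαcos : v α * Real.cos (ρ * (β - α)) ≤ (∫ s in α..β, (a s - ρ ^ 2)) * u β := by
    have h5 : u α * Real.sin (ρ * (β - α)) = 0 := by rw [huα]; ring
    nlinarith [hkeyα, hbound]
  have hlow : ρ * u β * (Real.cos (ρ * (β - α)) / Real.sin (ρ * (β - α)))
      ≤ v α * Real.cos (ρ * (β - α)) := by
    have h1 : ρ * u β / Real.sin (ρ * (β - α)) ≤ v α := by
      rw [div_le_iff₀ hsinpos]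
      nlinarith [hkey2]
    have h2 := mul_le_mul_of_nonneg_right h1 (hφ0 α hαm)
    calc ρ * u β * (Real.cos (ρ * (β - α)) / Real.sin (ρ * (β - α)))
        = (ρ * u β / Real.sin (ρ * (β - α))) * Real.cos (ρ * (β - α)) := by ring
      _ ≤ v α * Real.cos (ρ * (β - α)) := h2
  rw [Real.cot_eq_cos_div_sin]
  have hfin : u β * (ρ * (Real.cos (ρ * (β - α)) / Real.sin (ρ * (β - α))))
      ≤ u β * (∫ s in α..β, (a s - ρ ^ 2)) := by
    nlinarith [hlow, hvαcos]
  exact le_of_mul_le_mul_left (by linarith [hfin]) hM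

lemma cont_of_int {a u v : ℝ → ℝ} {L c : ℝ} (hc0 : (0:ℝ) ≤ c) (hcL : c ≤ L)
    (hu : ∀ t ∈ Icc (0:ℝ) L, u t = u 0 + ∫ s in (0:ℝ)..t, v s)
    (hv : ∀ t ∈ Icc (0:ℝ) L, v t = -∫ s in (0:ℝ)..t, a s * u s)
    (hint : IntegrableOn (fun s => a s * u s) (Ioc 0 c)) :
    ContinuousOn u (Icc 0 c) ∧ ContinuousOn v (Icc 0 c) := by
  have hIccsub : Icc (0:ℝ) c ⊆ Icc 0 L := Icc_subset_Icc le_rfl hcL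
  have hvc : ContinuousOn v (Icc 0 c) := by
    have h1 : ContinuousOn (fun t => ∫ s in (0:ℝ)..t, a s * u s) (Icc 0 c) := by
      have := intervalIntegral.continuousOn_primitive_interval
        (a := (0:ℝ)) (b := c) (f := fun s => a s * u s) (μ := volume) ?_
      · rwa [uIcc_of_le hc0] at this
      · rw [uIcc_of_le hc0, integrableOn_Icc_iff_integrableOn_Ioc]; exact hint
    exact h1.neg.congr fun t ht => hv t (hIccsub ht)
  have huc : ContinuousOn u (Icc 0 c) := by
    have h1 : ContinuousOn (fun t => ∫ s in (0:ℝ)..t, v s) (Icc 0 c) := by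
      have := intervalIntegral.continuousOn_primitive_interval
        (a := (0:ℝ)) (b := c) (f := v) (μ := volume) ?_
      · rwa [uIcc_of_le hc0] at this
      · rw [uIcc_of_le hc0]; exact hvc.integrableOn_Icc
    exact (continuousOn_const.add h1).congr fun t ht => hu t (hIccsub ht)
  exact ⟨huc, hvc⟩

/-- if `u` is continuous, nonvanishing on `[c,d]`, positive at `c`, it is positive at `d`. -/
lemma pos_propagate_right {u : ℝ → ℝ} {c d : ℝ} (hcd : c ≤ d)
    (hcont : ContinuousOn u (Icc c d)) (hnz : ∀ t ∈ Icc c d, u t ≠ 0)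
    (hpos : 0 < u c) : 0 < u d := by
  by_contra h
  push_neg at h
  have hneg : u d < 0 := lt_of_le_of_ne h (hnz d ⟨hcd, le_rfl⟩)
  have h0 : (0:ℝ) ∈ Ioo (u d) (u c) := ⟨hneg, hpos⟩
  obtain ⟨z, hz, hz0⟩ := intermediate_value_Ioo' hcd hcont h0
  exact hnz z ⟨hz.1.le, hz.2.le⟩ hz0

lemma pos_propagate_left {u : ℝ → ℝ} {c d : ℝ} (hcd : c ≤ d)
    (hcont : ContinuousOn u (Icc c d)) (hnz : ∀ t ∈ Icc c d, u t ≠ 0)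
    (hpos : 0 < u d) : 0 < u c := by
  by_contra h
  push_neg at h
  have hneg : u c < 0 := lt_of_le_of_ne h (hnz c ⟨le_rfl, hcd⟩)
  have h0 : (0:ℝ) ∈ Ioo (u c) (u d) := ⟨hneg, hpos⟩
  obtain ⟨z, hz, hz0⟩ := intermediate_value_Ioo hcd hcont h0
  exact hnz z ⟨hz.1.le, hz.2.le⟩ hz0

/-- tail bound: if u is positive on (ξ, L) then it is bounded on [p, L). -/
lemma tail_bound {a u v : ℝ → ℝ} {L ξ p : ℝ} (hξ0 : (0:ℝ) ≤ ξ) (hξp : ξ < p) (hpL : p < L)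
    (hvcont : ContinuousOn v (Ico 0 L))
    (hrepu : ∀ s t : ℝ, 0 ≤ s → s ≤ t → t < L → u t = u s + ∫ r in s..t, v r)
    (hrepv : ∀ s t : ℝ, 0 ≤ s → s ≤ t → t < L → v t = v s - ∫ r in s..t, a r * u r)
    (hae : ∀ᵐ t ∂(volume.restrict (Ioo 0 L)), 0 ≤ a t)
    (hupos : ∀ t, ξ < t → t < L → 0 < u t) :
    ∀ t, p ≤ t → t < L → u t ≤ u p + (L - p) * |v p| := by
  intro t hpt htL
  have hp0 : (0:ℝ) ≤ p := le_trans hξ0 hξp.le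
  have hvle : ∀ r ∈ Icc p t, v r ≤ v p := by
    intro r hr
    have hrL : r < L := lt_of_le_of_lt hr.2 htL
    have h1 := hrepv p r hp0 hr.1 hrL
    have h2 : 0 ≤ ∫ s in p..r, a s * u s := by
      apply intervalIntegral.integral_nonneg_of_ae_restrict hr.1
      have hsub : Icc p r ⊆ Ioo 0 L := fun s hs =>
        ⟨lt_of_le_of_lt hξ0 (lt_of_lt_of_le hξp hs.1), lt_of_le_of_lt hs.2 hrL⟩
      have h3 : ∀ᵐ s ∂(volume.restrict (Icc p r)), 0 ≤ a s :=
        ae_restrict_of_ae_restrict_of_subset hsub hae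
      filter_upwards [h3, ae_restrict_mem measurableSet_Icc] with s h4 h5
      exact mul_nonneg h4
        (hupos s (lt_of_lt_of_le hξp h5.1) (lt_of_le_of_lt h5.2 hrL)).le
    linarith
  have hrep := hrepu p t hp0 hpt htL
  have hvint : IntervalIntegrable v volume p t := by
    apply ContinuousOn.intervalIntegrable
    rw [uIcc_of_le hpt]
    exact hvcont.mono (fun s hs => ⟨le_trans hp0 hs.1, lt_of_le_of_lt hs.2 htL⟩)
  have hmono : (∫ r in p..t, v r) ≤ ∫ _ in p..t, v p :=
    intervalIntegral.integral_mono_on hpt hvint intervalIntegrable_const hvle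
  rw [intervalIntegral.integral_const, smul_eq_mul] at hmono
  have habs : (t - p) * v p ≤ (L - p) * |v p| := by
    rcases le_or_gt 0 (v p) with h | h
    · have h1 : (t - p) * v p ≤ (L - p) * v p :=
        mul_le_mul_of_nonneg_right (by linarith) h
      have h2 : |v p| = v p := abs_of_nonneg h
      rw [h2]; exact h1
    · have h1 : (t - p) * v p ≤ 0 := mul_nonpos_of_nonneg_of_nonpos (by linarith) h.le
      have h2 : 0 ≤ (L - p) * |v p| := mul_nonneg (by linarith) (abs_nonneg _)
      linarith
  linarith

/-- if a ∈ Λₙ, u is a nontrivial solution of the Neumann problem with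
zeros of u' being 0 = x₀ < x₂ < … < x_{2m} = L and zeros of u interlacing at the odd
indices, then ‖a - λₙ‖_{L¹(0,L)} ≥ (nπ/L)·Σ_{i=0}^{2m-1} cot((nπ/L)(x_{i+1} - x_i)). -/
theorem L1_norm_ge_cot_sum (L : ℝ) (hL : 0 < L) (n : ℕ) (hn : 1 ≤ n)
    (a u v : ℝ → ℝ) (m : ℕ) (hm : 1 ≤ m) (x : ℕ → ℝ)
    (ha : IntegrableOn a (Ioo 0 L))
    (hprec₁ : ∀ᵐ t ∂(volume.restrict (Ioo 0 L)), (n : ℝ) ^ 2 * π ^ 2 / L ^ 2 ≤ a t)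
    (hprec₂ : 0 < volume (Ioo 0 L ∩ {t | (n : ℝ) ^ 2 * π ^ 2 / L ^ 2 < a t}))
    (hu : ∀ t ∈ Icc (0:ℝ) L, u t = u 0 + ∫ s in (0:ℝ)..t, v s)
    (hv : ∀ t ∈ Icc (0:ℝ) L, v t = - ∫ s in (0:ℝ)..t, a s * u s)
    (hvL : v L = 0)
    (hnontriv : ∃ t ∈ Icc (0:ℝ) L, u t ≠ 0)
    (hmono : StrictMonoOn x (Iic (2 * m)))
    (hx0 : x 0 = 0) (hxL : x (2 * m) = L)
    (hrange : ∀ i ≤ 2 * m, x i ∈ Icc (0:ℝ) L)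
    (hzv : ∀ i ≤ 2 * m, Even i → v (x i) = 0)
    (hzu : ∀ i ≤ 2 * m, Odd i → u (x i) = 0)
    (hallv : ∀ t ∈ Icc (0:ℝ) L, v t = 0 → ∃ i ≤ 2 * m, Even i ∧ t = x i)
    (hallu : ∀ t ∈ Icc (0:ℝ) L, u t = 0 → ∃ i ≤ 2 * m, Odd i ∧ t = x i) :
    (∫ t in (0:ℝ)..L, |a t - (n : ℝ) ^ 2 * π ^ 2 / L ^ 2|) ≥
      (n : ℝ) * π / L *
        ∑ i ∈ Finset.range (2 * m), Real.cot ((n : ℝ) * π / L * (x (i + 1) - x i)) := by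
  have hL0 : (0:ℝ) ≤ L := hL.le
  set ρ := (n : ℝ) * π / L with hρdef
  have hn0 : (0:ℝ) < (n:ℝ) := by exact_mod_cast hn
  have hρ : 0 < ρ := by rw [hρdef]; positivity
  have hlam : (n : ℝ) ^ 2 * π ^ 2 / L ^ 2 = ρ ^ 2 := by
    rw [hρdef]; field_simp
  have hprec : ∀ᵐ t ∂(volume.restrict (Ioo 0 L)), ρ ^ 2 ≤ a t := by
    filter_upwards [hprec₁] with t ht
    rwa [hlam] at ht
  have hanonneg : ∀ᵐ t ∂(volume.restrict (Ioo 0 L)), 0 ≤ a t := by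
    filter_upwards [hprec] with t ht
    exact le_trans (by positivity) ht
  -- Phase 1 : integrability of a·u on (0, L]
  have Hint : IntegrableOn (fun s => a s * u s) (Ioc 0 L) volume := by
    by_contra hbad
    set B := {s : ℝ | s ∈ Icc (0:ℝ) L ∧ ¬ IntegrableOn (fun r => a r * u r) (Ioc 0 s) volume}
      with hB
    have hLB : L ∈ B := ⟨⟨hL0, le_rfl⟩, hbad⟩
    have hBne : B.Nonempty := ⟨L, hLB⟩
    have hBbdd : BddBelow B := ⟨0, fun s hs => hs.1.1⟩
    have hT0 : 0 ≤ sInf B := le_csInf hBne fun s hs => hs.1.1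
    have hTL : sInf B ≤ L := csInf_le hBbdd hLB
    have hup : ∀ s, sInf B < s → s ≤ L →
        ¬ IntegrableOn (fun r => a r * u r) (Ioc 0 s) volume := by
      intro s h1 h2 hi
      obtain ⟨b, hbB, hbs⟩ := (csInf_lt_iff hBbdd hBne).1 h1
      exact hbB.2 (hi.mono_set (Ioc_subset_Ioc le_rfl hbs.le))
    have hdown : ∀ s, 0 ≤ s → s < sInf B →
        IntegrableOn (fun r => a r * u r) (Ioc 0 s) volume := by
      intro s h0 hsT
      by_contra h
      exact absurd (csInf_le hBbdd ⟨⟨h0, le_trans hsT.le hTL⟩, h⟩) (not_le.2 hsT)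
    have hvzero : ∀ s, sInf B < s → s ≤ L → v s = 0 := by
      intro s h1 h2
      have h0s : (0:ℝ) ≤ s := le_trans hT0 h1.le
      have h3 : ¬ IntervalIntegrable (fun r => a r * u r) volume 0 s := by
        rw [intervalIntegrable_iff_integrableOn_Ioc_of_le h0s]
        exact hup s h1 h2
      rw [hv s ⟨h0s, h2⟩, intervalIntegral.integral_undef h3, neg_zero]
    rcases lt_or_eq_of_le hTL with hTL' | hTL'
    · -- sInf B < L : infinitely many zeros of v, contradiction
      have hsub : Ioc (sInf B) L ⊆ x '' (Iic (2*m)) := by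
        intro t ht
        obtain ⟨i, hi, _, rfl⟩ := hallv t ⟨le_trans hT0 ht.1.le, ht.2⟩ (hvzero t ht.1 ht.2)
        exact ⟨i, mem_Iic.2 hi, rfl⟩
      exact (Set.Ioc_infinite hTL') (((Set.finite_Iic (2*m)).image x).subset hsub)
    · -- sInf B = L
      have hints : ∀ s, 0 ≤ s → s < L →
          IntegrableOn (fun r => a r * u r) (Ioc 0 s) volume :=
        fun s h0 hsL => hdown s h0 (hTL' ▸ hsL)
      have hcontc : ∀ c, 0 ≤ c → c < L →
          ContinuousOn u (Icc 0 c) ∧ ContinuousOn v (Icc 0 c) :=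
        fun c h0 hc => cont_of_int h0 hc.le hu hv (hints c h0 hc)
      have hglue : ∀ w : ℝ → ℝ, (∀ c, 0 ≤ c → c < L → ContinuousOn w (Icc 0 c)) →
          ContinuousOn w (Ico 0 L) := by
        intro w hw t ht
        have hc1 : (0:ℝ) ≤ (t + L)/2 := by linarith [ht.1]
        have hc2 : (t + L)/2 < L := by linarith [ht.2]
        have h1 : ContinuousWithinAt w (Icc 0 ((t + L)/2)) t :=
          hw _ hc1 hc2 t ⟨ht.1, by linarith [ht.2]⟩
        apply h1.mono_of_mem_nhdsWithin
        have h2 : Iio ((t + L)/2) ∈ 𝓝[Ico 0 L] t :=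
          mem_nhdsWithin_of_mem_nhds (Iio_mem_nhds (by linarith [ht.2]))
        filter_upwards [h2, self_mem_nhdsWithin] with s h3 h4
        exact ⟨h4.1, h3.le⟩
      have hucont : ContinuousOn u (Ico 0 L) := hglue u fun c h0 hc => (hcontc c h0 hc).1
      have hvcont : ContinuousOn v (Ico 0 L) := hglue v fun c h0 hc => (hcontc c h0 hc).2
      have hvintt : ∀ t : ℝ, 0 ≤ t → t < L → IntervalIntegrable v volume 0 t := by
        intro t h0 htL
        apply ContinuousOn.intervalIntegrable
        rw [uIcc_of_le h0]
        exact (hcontc t h0 htL).2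
      have hrepu' : ∀ s t : ℝ, 0 ≤ s → s ≤ t → t < L → u t = u s + ∫ r in s..t, v r := by
        intro s t h0 hst htL
        have h0t : (0:ℝ) ≤ t := le_trans h0 hst
        have hvt := hvintt t h0t htL
        have hvs : IntervalIntegrable v volume 0 s := hvt.mono_set
          (by rw [uIcc_of_le h0, uIcc_of_le h0t]; exact Icc_subset_Icc le_rfl hst)
        have h3 := intervalIntegral.integral_interval_sub_left hvt hvs
        rw [hu t ⟨h0t, htL.le⟩, hu s ⟨h0, le_trans hst htL.le⟩]
        linarith [h3]
      have hrepv' : ∀ s t : ℝ, 0 ≤ s → s ≤ t → t < L →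
          v t = v s - ∫ r in s..t, a r * u r := by
        intro s t h0 hst htL
        have h0t : (0:ℝ) ≤ t := le_trans h0 hst
        have hat : IntervalIntegrable (fun r => a r * u r) volume 0 t :=
          (intervalIntegrable_iff_integrableOn_Ioc_of_le h0t).2 (hints t h0t htL)
        have has : IntervalIntegrable (fun r => a r * u r) volume 0 s := hat.mono_set
          (by rw [uIcc_of_le h0, uIcc_of_le h0t]; exact Icc_subset_Icc le_rfl hst)
        have h3 := intervalIntegral.integral_interval_sub_left hat has
        rw [hv t ⟨h0t, htL.le⟩, hv s ⟨h0, le_trans hst htL.le⟩]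
        linarith [h3]
      -- the last node is < L, and u does not vanish beyond it
      have h2m1 : 2*m - 1 ≤ 2*m := by omega
      have hξmem := hrange _ h2m1
      have hξL : x (2*m-1) < L := by
        have := hmono (mem_Iic.2 h2m1) (mem_Iic.2 le_rfl) (by omega : 2*m-1 < 2*m)
        rwa [hxL] at this
      have hune : ∀ t, x (2*m-1) < t → t < L → u t ≠ 0 := by
        intro t h1 h2 h0
        obtain ⟨i, hi, hiodd, hieq⟩ := hallu t ⟨le_trans hξmem.1 h1.le, h2.le⟩ h0
        have hgt : 2*m-1 < i :=
          (hmono.lt_iff_lt (mem_Iic.2 h2m1) (mem_Iic.2 hi)).1 (hieq ▸ h1)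
        have hlt : i < 2*m :=
          (hmono.lt_iff_lt (mem_Iic.2 hi) (mem_Iic.2 le_rfl)).1
            (by rw [hxL]; exact hieq ▸ h2)
        omega
      set p := (x (2*m-1) + L)/2 with hpdef
      have hξp : x (2*m-1) < p := by rw [hpdef]; linarith
      have hpL : p < L := by rw [hpdef]; linarith
      have hp0 : (0:ℝ) ≤ p := le_trans hξmem.1 hξp.le
      have hupne : u p ≠ 0 := hune p hξp hpL
      -- uniform bound for |u| on [p, L)
      have hbnd : ∀ t, p ≤ t → t < L → |u t| ≤ |u p| + (L - p) * |v p| := by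
        have hprop : ∀ (w : ℝ → ℝ), ContinuousOn w (Ico 0 L) →
            (∀ t, x (2*m-1) < t → t < L → w t ≠ 0) → 0 < w p →
            ∀ t, x (2*m-1) < t → t < L → 0 < w t := by
          intro w hwc hwne hwp t h1 h2
          have hsub : ∀ c d : ℝ, x (2*m-1) < c → d < L → Icc c d ⊆ Ico 0 L :=
            fun c d hc hd s hs =>
              ⟨le_trans hξmem.1 (le_trans hc.le hs.1), lt_of_le_of_lt hs.2 hd⟩
          rcases le_total p t with h | h
          · exact pos_propagate_right h (hwc.mono (hsub p t hξp h2))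
              (fun s hs => hwne s (lt_of_lt_of_le hξp hs.1) (lt_of_le_of_lt hs.2 h2)) hwp
          · exact pos_propagate_left h (hwc.mono (hsub t p h1 hpL))
              (fun s hs => hwne s (lt_of_lt_of_le h1 hs.1) (lt_of_le_of_lt hs.2 hpL)) hwp
        intro t hpt htL
        rcases hupne.lt_or_gt with hneg | hpos
        · -- u p < 0 : work with -u, -v
          have hupos' := hprop (fun s => -u s) hucont.neg
            (fun s h1 h2 => neg_ne_zero.2 (hune s h1 h2)) (by simpa using hneg)
          have htb := tail_bound (a := a) (u := fun s => -u s) (v := fun s => -v s)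
            hξmem.1 hξp hpL hvcont.neg
            (fun s t h0 hst htL => by
              rw [intervalIntegral.integral_neg]
              have := hrepu' s t h0 hst htL
              linarith [this])
            (fun s t h0 hst htL => by
              simp only [mul_neg, intervalIntegral.integral_neg]
              have := hrepv' s t h0 hst htL
              linarith [this])
            hanonneg hupos' t hpt htL
          have h5 : 0 < -u t := hupos' t (lt_of_lt_of_le hξp hpt) htL
          rw [abs_of_neg (by linarith : u t < 0), abs_of_neg hneg]
          simp only [abs_neg] at htb ⊢
          linarith [htb]
        · -- u p > 0
          have hupos' := hprop u hucont hune hpos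
          have htb := tail_bound (a := a) (u := u) (v := v)
            hξmem.1 hξp hpL hvcont hrepu' hrepv' hanonneg hupos' t hpt htL
          have h5 : 0 < u t := hupos' t (lt_of_lt_of_le hξp hpt) htL
          rw [abs_of_pos h5, abs_of_pos hpos]
          linarith [htb]
      -- bound on [0, p]
      obtain ⟨C0, hC0⟩ := isCompact_Icc.exists_bound_of_continuousOn (hcontc p hp0 hpL).1
      set C := max C0 (|u p| + (L - p) * |v p|) with hC
      have hCb : ∀ t ∈ Ioo (0:ℝ) L, |u t| ≤ C := by
        intro t ht
        rcases le_total t p with h | h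
        · exact le_trans (by simpa [Real.norm_eq_abs] using hC0 t ⟨ht.1.le, h⟩)
            (le_max_left _ _)
        · exact le_trans (hbnd t h ht.2) (le_max_right _ _)
      have humeas : AEMeasurable u (volume.restrict (Ioo 0 L)) :=
        (hucont.aemeasurable measurableSet_Ico).mono_measure
          (Measure.restrict_mono Ioo_subset_Ico_self le_rfl)
      have haui' : IntegrableOn (fun t => a t * u t) (Ioo 0 L) volume := by
        apply Integrable.mono' (ha.abs.const_mul C)
        · exact (ha.aemeasurable.mul humeas).aestronglyMeasurable
        · filter_upwards [ae_restrict_mem measurableSet_Ioo] with t ht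
          rw [Real.norm_eq_abs, abs_mul]
          calc |a t| * |u t| ≤ |a t| * C :=
                mul_le_mul_of_nonneg_left (hCb t ht) (abs_nonneg _)
            _ = C * |a t| := mul_comm _ _
      exact hbad (haui'.congr_set_ae Ioo_ae_eq_Ioc.symm)
  -- Phase 2 : continuity and representations on [0, L]
  obtain ⟨hucont, hvcont⟩ := cont_of_int hL0 le_rfl hu hv Hint
  have hauint : ∀ t ∈ Icc (0:ℝ) L, IntervalIntegrable (fun r => a r * u r) volume 0 t :=
    fun t ht => (intervalIntegrable_iff_integrableOn_Ioc_of_le ht.1).2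
      (Hint.mono_set (Ioc_subset_Ioc le_rfl ht.2))
  have hvintt : ∀ t ∈ Icc (0:ℝ) L, IntervalIntegrable v volume 0 t := fun t ht =>
    ContinuousOn.intervalIntegrable
      (by rw [uIcc_of_le ht.1]; exact hvcont.mono (Icc_subset_Icc le_rfl ht.2))
  have Hrepu : ∀ s ∈ Icc (0:ℝ) L, ∀ t ∈ Icc (0:ℝ) L, u t = u s + ∫ r in s..t, v r := by
    intro s hs t ht
    have h3 := intervalIntegral.integral_interval_sub_left (hvintt t ht) (hvintt s hs)
    rw [hu t ht, hu s hs]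
    linarith [h3]
  have Hrepv : ∀ s ∈ Icc (0:ℝ) L, ∀ t ∈ Icc (0:ℝ) L,
      v t = v s - ∫ r in s..t, a r * u r := by
    intro s hs t ht
    have h3 := intervalIntegral.integral_interval_sub_left (hauint t ht) (hauint s hs)
    rw [hv t ht, hv s hs]
    linarith [h3]
  have haL : IntegrableOn a (Ioc 0 L) volume := ha.congr_set_ae Ioo_ae_eq_Ioc.symm
  -- Phase 3 : per-interval estimate
  have main_i : ∀ i, i < 2*m →
      ρ * Real.cot (ρ * (x (i+1) - x i)) ≤ ∫ t in (x i)..(x (i+1)), (a t - ρ ^ 2) := by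
    intro i hilt
    have hi1 : i ≤ 2*m := hilt.le
    have hi2 : i + 1 ≤ 2*m := hilt
    have hαβ : x i < x (i+1) :=
      hmono (mem_Iic.2 hi1) (mem_Iic.2 hi2) (Nat.lt_succ_self i)
    have hα0 : 0 ≤ x i := by
      have := hmono.monotoneOn (mem_Iic.2 (by omega : 0 ≤ 2*m)) (mem_Iic.2 hi1)
        (Nat.zero_le i)
      rwa [hx0] at this
    have hβL : x (i+1) ≤ L := by
      have := hmono.monotoneOn (mem_Iic.2 hi2) (mem_Iic.2 le_rfl) hi2
      rwa [hxL] at this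
    have hIccsub : Icc (x i) (x (i+1)) ⊆ Icc 0 L := Icc_subset_Icc hα0 hβL
    have hIoosub : Ioo (x i) (x (i+1)) ⊆ Ioo 0 L := fun t ht =>
      ⟨lt_of_le_of_lt hα0 ht.1, lt_of_lt_of_le ht.2 hβL⟩
    have hae' : ∀ᵐ s ∂(volume.restrict (Ioc (x i) (x (i+1)))), ρ ^ 2 ≤ a s := by
      have h2 := ae_restrict_of_ae_restrict_of_subset hIoosub hprec
      rwa [Measure.restrict_congr_set Ioo_ae_eq_Ioc] at h2
    have hai' : IntegrableOn a (Ioc (x i) (x (i+1))) volume :=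
      (ha.mono_set hIoosub).congr_set_ae Ioo_ae_eq_Ioc.symm
    have haui' : IntegrableOn (fun s => a s * u s) (Ioc (x i) (x (i+1))) volume :=
      Hint.mono_set (Ioc_subset_Ioc hα0 hβL)
    have hcu' : ContinuousOn u (Icc (x i) (x (i+1))) := hucont.mono hIccsub
    have hcv' : ContinuousOn v (Icc (x i) (x (i+1))) := hvcont.mono hIccsub
    have hrepu_i : ∀ s ∈ Icc (x i) (x (i+1)), ∀ t ∈ Icc (x i) (x (i+1)),
        u t = u s + ∫ r in s..t, v r :=
      fun s hs t ht => Hrepu s (hIccsub hs) t (hIccsub ht)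
    have hrepv_i : ∀ s ∈ Icc (x i) (x (i+1)), ∀ t ∈ Icc (x i) (x (i+1)),
        v t = v s - ∫ r in s..t, a r * u r :=
      fun s hs t ht => Hrepv s (hIccsub hs) t (hIccsub ht)
    have hnzI : ∀ t ∈ Ioo (x i) (x (i+1)), u t ≠ 0 := by
      intro t ht h0
      obtain ⟨j, hj, hjodd, hjeq⟩ := hallu t (Icc_subset_Icc hα0 hβL ⟨ht.1.le, ht.2.le⟩) h0
      have hji : i < j :=
        (hmono.lt_iff_lt (mem_Iic.2 hi1) (mem_Iic.2 hj)).1 (hjeq ▸ ht.1)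
      have hji2 : j < i+1 :=
        (hmono.lt_iff_lt (mem_Iic.2 hj) (mem_Iic.2 hi2)).1 (hjeq ▸ ht.2)
      omega
    -- u does not vanish at even-indexed nodes
    have hevenne : ∀ k, k ≤ 2*m → Even k → u (x k) ≠ 0 := by
      intro k hk hkeven h0
      obtain ⟨j, hj, hjodd, hjeq⟩ := hallu (x k) (hrange k hk) h0
      have : k = j := hmono.injOn (mem_Iic.2 hk) (mem_Iic.2 hj) hjeq
      rw [this] at hkeven
      exact (Nat.not_odd_iff_even.2 hkeven) hjodd
    rcases Nat.even_or_odd i with hieven | hiodd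
    · -- type A
      have hvα : v (x i) = 0 := hzv i hi1 hieven
      have huβ : u (x (i+1)) = 0 := hzu (i+1) hi2 hieven.add_one
      have huαne : u (x i) ≠ 0 := hevenne i hi1 hieven
      rcases huαne.lt_or_gt with hneg | hpos
      · -- u (x i) < 0 : apply coreA to (-u, -v)
        have hupos : ∀ t ∈ Ico (x i) (x (i+1)), 0 < -u t := by
          intro t ht
          rcases eq_or_lt_of_le ht.1 with h | h
          · rw [← h]; simpa using hneg
          · refine pos_propagate_right (u := fun s => -u s) (c := x i) (d := t) ht.1
              (hcu'.mono (Icc_subset_Icc le_rfl ht.2.le)).neg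
              (fun s hs => ?_) (by simpa using hneg)
            rcases eq_or_lt_of_le hs.1 with h' | h'
            · rw [← h']; simpa using hneg.ne
            · exact neg_ne_zero.2 (hnzI s ⟨h', lt_of_le_of_lt hs.2 ht.2⟩)
        have hcore := coreA (a := a) (u := fun t => -u t) (v := fun t => -v t)
          hρ hαβ hcu'.neg hcv'.neg
          (fun t ht => by
            rw [intervalIntegral.integral_neg]
            have := hrepu_i (x i) ⟨le_rfl, hαβ.le⟩ t ht
            linarith [this])
          (fun t ht => by
            simp only [mul_neg, intervalIntegral.integral_neg]
            have := hrepv_i (x i) ⟨le_rfl, hαβ.le⟩ t ht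
            linarith [this])
          hai' (haui'.neg.congr (Filter.EventuallyEq.of_eq (by funext s; simp))) hae'
          (neg_eq_zero.2 hvα) (neg_eq_zero.2 huβ) hupos
        exact hcore.2
      · -- u (x i) > 0
        have hupos : ∀ t ∈ Ico (x i) (x (i+1)), 0 < u t := by
          intro t ht
          rcases eq_or_lt_of_le ht.1 with h | h
          · rw [← h]; exact hpos
          · refine pos_propagate_right ht.1 (hcu'.mono (Icc_subset_Icc le_rfl ht.2.le))
              (fun s hs => ?_) hpos
            rcases eq_or_lt_of_le hs.1 with h' | h'
            · rw [← h']; exact hpos.ne'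
            · exact hnzI s ⟨h', lt_of_le_of_lt hs.2 ht.2⟩
        have hcore := coreA (a := a) (u := u) (v := v) hρ hαβ hcu' hcv'
          (fun t ht => hrepu_i (x i) ⟨le_rfl, hαβ.le⟩ t ht)
          (fun t ht => hrepv_i (x i) ⟨le_rfl, hαβ.le⟩ t ht)
          hai' haui' hae' hvα huβ hupos
        exact hcore.2
    · -- type B
      have huα : u (x i) = 0 := hzu i hi1 hiodd
      have hvβ : v (x (i+1)) = 0 := hzv (i+1) hi2 hiodd.add_one
      have huβne : u (x (i+1)) ≠ 0 := hevenne (i+1) hi2 hiodd.add_one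
      rcases huβne.lt_or_gt with hneg | hpos
      · have hupos : ∀ t ∈ Ioc (x i) (x (i+1)), 0 < -u t := by
          intro t ht
          rcases eq_or_lt_of_le ht.2 with h | h
          · rw [h]; simpa using hneg
          · refine pos_propagate_left (u := fun s => -u s) (c := t) (d := x (i+1)) ht.2
              (hcu'.mono (Icc_subset_Icc ht.1.le le_rfl)).neg
              (fun s hs => ?_) (by simpa using hneg)
            rcases eq_or_lt_of_le hs.2 with h' | h'
            · rw [h']; simpa using hneg.ne
            · exact neg_ne_zero.2 (hnzI s ⟨lt_of_lt_of_le ht.1 hs.1, h'⟩)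
        have hcore := coreB (a := a) (u := fun t => -u t) (v := fun t => -v t)
          hρ hαβ hcu'.neg hcv'.neg
          (fun s hs t ht => by
            rw [intervalIntegral.integral_neg]
            have := hrepu_i s hs t ht
            linarith [this])
          (fun s hs t ht => by
            simp only [mul_neg, intervalIntegral.integral_neg]
            have := hrepv_i s hs t ht
            linarith [this])
          hai' (haui'.neg.congr (Filter.EventuallyEq.of_eq (by funext s; simp))) hae'
          (neg_eq_zero.2 huα) (neg_eq_zero.2 hvβ) hupos
        exact hcore.2
      · have hupos : ∀ t ∈ Ioc (x i) (x (i+1)), 0 < u t := by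
          intro t ht
          rcases eq_or_lt_of_le ht.2 with h | h
          · rw [h]; exact hpos
          · refine pos_propagate_left ht.2 (hcu'.mono (Icc_subset_Icc ht.1.le le_rfl))
              (fun s hs => ?_) hpos
            rcases eq_or_lt_of_le hs.2 with h' | h'
            · rw [h']; exact hpos.ne'
            · exact hnzI s ⟨lt_of_lt_of_le ht.1 hs.1, h'⟩
        have hcore := coreB (a := a) (u := u) (v := v) hρ hαβ hcu' hcv'
          hrepu_i hrepv_i hai' haui' hae' huα hvβ hupos
        exact hcore.2
  -- Phase 4 : assembly
  have hIab : IntervalIntegrable (fun t => a t - ρ ^ 2) volume 0 L :=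
    ((intervalIntegrable_iff_integrableOn_Ioc_of_le hL0).2 haL).sub intervalIntegrable_const
  have hIabk : ∀ k < 2*m,
      IntervalIntegrable (fun t => a t - ρ ^ 2) volume (x k) (x (k+1)) := by
    intro k hk
    apply hIab.mono_set
    rw [uIcc_of_le hL0, uIcc_of_le (hmono (mem_Iic.2 hk.le) (mem_Iic.2 hk)
      (Nat.lt_succ_self k)).le]
    exact Icc_subset_Icc (hrange k hk.le).1 (hrange (k+1) hk).2
  have hsum := intervalIntegral.sum_integral_adjacent_intervals
    (f := fun t => a t - ρ ^ 2) (μ := volume) (a := x) (n := 2*m) hIabk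
  rw [hx0, hxL] at hsum
  have habs : (∫ t in (0:ℝ)..L, (a t - ρ ^ 2)) ≤ ∫ t in (0:ℝ)..L, |a t - ρ ^ 2| :=
    intervalIntegral.integral_mono_on hL0 hIab hIab.abs (fun t _ => le_abs_self _)
  rw [ge_iff_le]
  simp only [hlam]
  rw [Finset.mul_sum]
  calc ∑ i ∈ Finset.range (2*m), ρ * Real.cot (ρ * (x (i+1) - x i))
      ≤ ∑ i ∈ Finset.range (2*m), ∫ t in (x i)..(x (i+1)), (a t - ρ ^ 2) :=
        Finset.sum_le_sum fun i hi => main_i i (Finset.mem_range.1 hi)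
    _ = ∫ t in (0:ℝ)..L, (a t - ρ ^ 2) := hsum
    _ ≤ ∫ t in (0:ℝ)..L, |a t - ρ ^ 2| := habs
end
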